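/- arXiv:2305.09465 — 3 statements merged into one kernel-verified Lean document; each statement's English description precedes it below -/
import Mathlib

section
/- For every natural number N there exists a vertex-transitive graph X with more than N vertices such that no subgroup of the automorphism group of X acts regularly on the vertex set (i.e., X is not a Cayley graph) and the Hamilton compression of X equals 1. (In particular, there exist infinitely many non-Cayley vertex-transitive graphs with Hamilton compression equal to 1.) -/
set_option linter.unusedSectionVars false
set_option maxHeartbeats 1000000


open SimpleGraph

/-- The automorphism group of a simple graph, as a subgroup of the permutation group
of the vertex set. -/
def autSubgroup {V : Type*} (X : SimpleGraph V) : Subgroup (Equiv.Perm V) where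
  carrier := {π | ∀ u v : V, X.Adj (π u) (π v) ↔ X.Adj u v}
  one_mem' := fun u v => Iff.rfl
  mul_mem' := fun {a b} ha hb u v => (ha (b u) (b v)).trans (hb u v)
  inv_mem' := fun {a} ha u v => by simpa using (ha (a⁻¹ u) (a⁻¹ v)).symm

/-- `c` is a Hamilton cycle of `X`, presented as a cyclic enumeration
`v_0, v_1, …, v_{N-1}` of the vertices (indices modulo `N = |V|`) with consecutive
vertices adjacent. -/
def IsHamCycle {V : Type*} [Fintype V] (X : SimpleGraph V)
    (c : ZMod (Fintype.card V) → V) : Prop :=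
  Function.Bijective c ∧ ∀ i, X.Adj (c i) (c (i + 1))

/-- The Hamilton cycle `c` of `X` is `k`-symmetric: `k ∣ N` and some automorphism `α`
of `X` satisfies `α (v_i) = v_{i + N/k}` for all `i`. -/
def IsSymmHamCycle {V : Type*} [Fintype V] (X : SimpleGraph V)
    (c : ZMod (Fintype.card V) → V) (k : ℕ) : Prop :=
  k ∣ Fintype.card V ∧
    ∃ α ∈ autSubgroup X, ∀ i, α (c i) = c (i + (Fintype.card V / k : ℕ))

/-- The Hamilton compression `κ(X)` of a graph `X`: the largest `k` such that some
Hamilton cycle of `X` is `k`-symmetric (and `0` if `X` has no Hamilton cycle). -/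
noncomputable def hamiltonCompression {V : Type*} [Fintype V] (X : SimpleGraph V) : ℕ :=
  sSup {k | ∃ c, IsHamCycle X c ∧ IsSymmHamCycle X c k}

/-- The metacirculant graph `X(m,n;r)` on vertex set `ℤ/m × ℤ/n`: vertex `(i,j)` is
adjacent to `(i, j ± r^i)` and `(i ± 1, j)`. -/
def metaGraph (m n : ℕ) (r : (ZMod n)ˣ) : SimpleGraph (ZMod m × ZMod n) :=
  SimpleGraph.fromRel (fun u v =>
    (u.1 = v.1 ∧ v.2 = u.2 + (r : ZMod n) ^ u.1.val) ∨ (u.2 = v.2 ∧ v.1 = u.1 + 1))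


namespace S11

def unit {p : ℕ} (k : ZMod p) (s : ZMod 2) : ZMod p := if s = 0 then 1 else k

def Y (p : ℕ) (k : ZMod p) : SimpleGraph (ZMod 2 × ZMod p) where
  Adj u v := (u.1 = v.1 ∧ u.2 ≠ v.2 ∧
      (v.2 - u.2 = unit k u.1 ∨ u.2 - v.2 = unit k u.1 ∨
       v.2 - u.2 = 2 * unit k u.1 ∨ u.2 - v.2 = 2 * unit k u.1)) ∨
    (u.1 ≠ v.1 ∧ u.2 = v.2)
  symm := by
    constructor
    rintro ⟨s,x⟩ ⟨t,y⟩ (⟨h1,h2,h3⟩|⟨h1,h2⟩)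
    · simp only at h1 h2 h3 ⊢
      subst h1
      left
      exact ⟨rfl, fun h => h2 h.symm, by tauto⟩
    · right; exact ⟨fun h => h1 h.symm, h2.symm⟩
  loopless := by constructor; rintro ⟨s,x⟩ (⟨h1,h2,h3⟩|⟨h1,h2⟩) <;> simp at h2 h1

section Main

variable {p : ℕ} [Fact (Nat.Prime p)] (hp : 113 < p) {k : ZMod p} (hk : k * k = -1)

include hp hk

omit hp hk in
lemma two_cases (s : ZMod 2) : s = 0 ∨ s = 1 := by revert s; decide

omit hp hk in
lemma ne_iff_add_one {s t : ZMod 2} : s ≠ t ↔ t = s + 1 := by revert s t; decide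

/-- the key lemma: small integer combinations a + b*k vanish only trivially -/
lemma key (a b : ℤ) (ha : a.natAbs ≤ 7) (hb : b.natAbs ≤ 7)
    (h : (a : ZMod p) + (b : ZMod p) * k = 0) : a = 0 ∧ b = 0 := by
  have hsq : ((a^2 + b^2 : ℤ) : ZMod p) = 0 := by
    push_cast
    linear_combination ((a : ZMod p) - (b:ZMod p)*k) * h + (b:ZMod p)^2 * hk
  have h3 : (p:ℤ) ∣ (a^2+b^2) := by rwa [ZMod.intCast_zmod_eq_zero_iff_dvd] at hsq
  have ha' : |a| ≤ 7 := by rw [Int.abs_eq_natAbs]; exact_mod_cast ha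
  have hb' : |b| ≤ 7 := by rw [Int.abs_eq_natAbs]; exact_mod_cast hb
  have hpz : (113:ℤ) < p := by exact_mod_cast hp
  have h2 : a^2 + b^2 < (p:ℤ) := by
    have e1 : a^2 = |a|^2 := (sq_abs a).symm
    have e2 : b^2 = |b|^2 := (sq_abs b).symm
    nlinarith [abs_nonneg a, abs_nonneg b]
  have h0 : 0 ≤ a^2 + b^2 := by positivity
  have h4 : a^2 + b^2 = 0 := by
    rcases h0.eq_or_lt with h5 | h5
    · omega
    · exact absurd (Int.le_of_dvd h5 h3) (by omega)
  constructor <;> nlinarith [sq_nonneg a, sq_nonneg b]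

/-- nonvanishing helper -/
lemma keyNe (a b : ℤ) (hab : ¬(a = 0 ∧ b = 0)) (ha : a.natAbs ≤ 7) (hb : b.natAbs ≤ 7) :
    (a : ZMod p) + (b : ZMod p) * k ≠ 0 := fun h => hab (key hp hk a b ha hb h)

lemma k_ne_zero : k ≠ 0 := by
  intro h
  rw [h] at hk
  have h1 : (1 : ZMod p) = 0 := by linear_combination hk
  exact one_ne_zero h1

lemma unit_ne_zero (s : ZMod 2) : unit k s ≠ 0 := by
  rcases two_cases s with h | h <;> subst h
  · simp [unit]
  · simpa [unit] using k_ne_zero hp hk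

/-- n • e ≠ 0 for small natural n ≥ 1 and e a unit step -/
lemma nsmul_unit_ne_zero (n : ℕ) (hn1 : 1 ≤ n) (hn : n ≤ 7) (s : ZMod 2) :
    (n : ZMod p) * unit k s ≠ 0 := by
  have hn0 : (n : ZMod p) ≠ 0 := by
    intro h
    have := keyNe hp hk n 0 (by omega) (by simpa using hn) (by norm_num)
    simp [h] at this
  exact mul_ne_zero hn0 (unit_ne_zero hp hk s)



lemma unit_lin_ne (m : ℤ) (hm : m ≠ 0) (hm7 : m.natAbs ≤ 7) (s : ZMod 2) :
    ((m : ℤ) : ZMod p) * unit k s ≠ 0 := by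
  rcases two_cases s with h | h <;> subst h
  · have := keyNe hp hk m 0 (by tauto) hm7 (by norm_num)
    simpa [unit] using this
  · have := keyNe hp hk 0 m (by tauto) (by norm_num) hm7
    simpa [unit] using this

omit hp hk in
lemma Y_adj {u v : ZMod 2 × ZMod p} : (Y p k).Adj u v ↔
    ((u.1 = v.1 ∧ u.2 ≠ v.2 ∧
      (v.2 - u.2 = unit k u.1 ∨ u.2 - v.2 = unit k u.1 ∨
       v.2 - u.2 = 2 * unit k u.1 ∨ u.2 - v.2 = 2 * unit k u.1)) ∨
    (u.1 ≠ v.1 ∧ u.2 = v.2)) := Iff.rfl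

lemma adj_same_iff (s : ZMod 2) (x y : ZMod p) :
    (Y p k).Adj (s,x) (s,y) ↔
      (y - x = unit k s ∨ x - y = unit k s ∨
       y - x = 2 * unit k s ∨ x - y = 2 * unit k s) := by
  rw [Y_adj]
  constructor
  · rintro (⟨-,-,h⟩|⟨h,-⟩)
    · exact h
    · exact absurd rfl h
  · intro h
    left
    refine ⟨rfl, ?_, h⟩
    rintro rfl
    rcases h with h|h|h|h
    · exact unit_lin_ne hp hk ((1 : ℤ)) (by decide) (by decide) s (by push_cast; linear_combination -h)
    · exact unit_lin_ne hp hk ((1 : ℤ)) (by decide) (by decide) s (by push_cast; linear_combination -h)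
    · exact unit_lin_ne hp hk ((2 : ℤ)) (by decide) (by decide) s (by push_cast; linear_combination -h)
    · exact unit_lin_ne hp hk ((2 : ℤ)) (by decide) (by decide) s (by push_cast; linear_combination -h)

omit hp hk in
lemma adj_cross_iff {s t : ZMod 2} (hst : s ≠ t) (x y : ZMod p) :
    (Y p k).Adj (s,x) (t,y) ↔ x = y := by
  rw [Y_adj]
  constructor
  · rintro (⟨h,-⟩|⟨-,h⟩)
    · exact absurd h hst
    · exact h
  · intro h; exact Or.inr ⟨hst, h⟩

omit hp hk in
lemma zmod2_mem {s t : ZMod 2} (hst : s ≠ t) (s' : ZMod 2) : s' = s ∨ s' = t := by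
  revert s t s'; decide

omit hp hk in
lemma spoke_no_common {s t : ZMod 2} (hst : s ≠ t) (x : ZMod p) (z : ZMod 2 × ZMod p) :
    ¬((Y p k).Adj (s,x) z ∧ (Y p k).Adj (t,x) z) := by
  obtain ⟨s', y⟩ := z
  rintro ⟨h1, h2⟩
  rcases zmod2_mem hst s' with rfl | rfl
  · rw [adj_cross_iff (fun h => hst h.symm) x y] at h2
    subst h2
    exact (Y p k).loopless.irrefl _ h1
  · rw [adj_cross_iff hst x y] at h1
    subst h1
    exact (Y p k).loopless.irrefl _ h2

lemma common_unit_iff (s : ZMod 2) (x : ZMod p) (z : ZMod 2 × ZMod p) :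
    ((Y p k).Adj (s,x) z ∧ (Y p k).Adj (s, x + unit k s) z) ↔
      (z = (s, x + 2 * unit k s) ∨ z = (s, x - unit k s)) := by
  constructor
  · rintro ⟨h1, h2⟩
    obtain ⟨s', y⟩ := z
    rcases eq_or_ne s s' with rfl | hss
    · rw [adj_same_iff hp hk] at h1 h2
      rcases h1 with h1|h1|h1|h1 <;> rcases h2 with h2|h2|h2|h2
      · exact absurd (show ((-1 : ℤ) : ZMod p) * S11.unit k s = 0 by push_cast; linear_combination h2 - h1) (unit_lin_ne hp hk (-1 : ℤ) (by decide) (by decide) s)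
      · exact absurd (show ((1 : ℤ) : ZMod p) * S11.unit k s = 0 by push_cast; linear_combination -h2 - h1) (unit_lin_ne hp hk (1 : ℤ) (by decide) (by decide) s)
      · exact absurd (show ((-2 : ℤ) : ZMod p) * S11.unit k s = 0 by push_cast; linear_combination h2 - h1) (unit_lin_ne hp hk (-2 : ℤ) (by decide) (by decide) s)
      · exact absurd (show ((2 : ℤ) : ZMod p) * S11.unit k s = 0 by push_cast; linear_combination -h2 - h1) (unit_lin_ne hp hk (2 : ℤ) (by decide) (by decide) s)
      · exact absurd (show ((-3 : ℤ) : ZMod p) * S11.unit k s = 0 by push_cast; linear_combination h2 + h1) (unit_lin_ne hp hk (-3 : ℤ) (by decide) (by decide) s)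
      · exact absurd (show ((-1 : ℤ) : ZMod p) * S11.unit k s = 0 by push_cast; linear_combination -h2 + h1) (unit_lin_ne hp hk (-1 : ℤ) (by decide) (by decide) s)
      · exact absurd (show ((-4 : ℤ) : ZMod p) * S11.unit k s = 0 by push_cast; linear_combination h2 + h1) (unit_lin_ne hp hk (-4 : ℤ) (by decide) (by decide) s)
      · right
        have hy : y = x - S11.unit k s := by linear_combination -h1
        rw [hy]
      · left
        have hy : y = x + 2 * S11.unit k s := by linear_combination h1
        rw [hy]
      · exact absurd (show ((2 : ℤ) : ZMod p) * S11.unit k s = 0 by push_cast; linear_combination -h2 - h1) (unit_lin_ne hp hk (2 : ℤ) (by decide) (by decide) s)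
      · exact absurd (show ((-1 : ℤ) : ZMod p) * S11.unit k s = 0 by push_cast; linear_combination h2 - h1) (unit_lin_ne hp hk (-1 : ℤ) (by decide) (by decide) s)
      · exact absurd (show ((3 : ℤ) : ZMod p) * S11.unit k s = 0 by push_cast; linear_combination -h2 - h1) (unit_lin_ne hp hk (3 : ℤ) (by decide) (by decide) s)
      · exact absurd (show ((-4 : ℤ) : ZMod p) * S11.unit k s = 0 by push_cast; linear_combination h2 + h1) (unit_lin_ne hp hk (-4 : ℤ) (by decide) (by decide) s)
      · exact absurd (show ((-2 : ℤ) : ZMod p) * S11.unit k s = 0 by push_cast; linear_combination -h2 + h1) (unit_lin_ne hp hk (-2 : ℤ) (by decide) (by decide) s)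
      · exact absurd (show ((-5 : ℤ) : ZMod p) * S11.unit k s = 0 by push_cast; linear_combination h2 + h1) (unit_lin_ne hp hk (-5 : ℤ) (by decide) (by decide) s)
      · exact absurd (show ((-1 : ℤ) : ZMod p) * S11.unit k s = 0 by push_cast; linear_combination -h2 + h1) (unit_lin_ne hp hk (-1 : ℤ) (by decide) (by decide) s)
    · rw [adj_cross_iff hss] at h1 h2
      exact absurd (show ((1 : ℤ) : ZMod p) * S11.unit k s = 0 by push_cast; linear_combination h2 - h1) (unit_lin_ne hp hk (1 : ℤ) (by decide) (by decide) s)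
  · rintro (rfl | rfl)
    · constructor
      · rw [adj_same_iff hp hk]; right; right; left; ring
      · rw [adj_same_iff hp hk]; left; ring
    · constructor
      · rw [adj_same_iff hp hk]; right; left; ring
      · rw [adj_same_iff hp hk]; right; right; right; ring

lemma common_2unit_iff (s : ZMod 2) (x : ZMod p) (z : ZMod 2 × ZMod p) :
    ((Y p k).Adj (s,x) z ∧ (Y p k).Adj (s, x + 2 * unit k s) z) ↔
      z = (s, x + unit k s) := by
  constructor
  · rintro ⟨h1, h2⟩
    obtain ⟨s', y⟩ := z
    rcases eq_or_ne s s' with rfl | hss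
    · rw [adj_same_iff hp hk] at h1 h2
      rcases h1 with h1|h1|h1|h1 <;> rcases h2 with h2|h2|h2|h2
      · exact absurd (show ((-2 : ℤ) : ZMod p) * S11.unit k s = 0 by push_cast; linear_combination h2 - h1) (unit_lin_ne hp hk (-2 : ℤ) (by decide) (by decide) s)
      · have hy : y = x + S11.unit k s := by linear_combination h1
        rw [hy]
      · exact absurd (show ((-3 : ℤ) : ZMod p) * S11.unit k s = 0 by push_cast; linear_combination h2 - h1) (unit_lin_ne hp hk (-3 : ℤ) (by decide) (by decide) s)
      · exact absurd (show ((1 : ℤ) : ZMod p) * S11.unit k s = 0 by push_cast; linear_combination -h2 - h1) (unit_lin_ne hp hk (1 : ℤ) (by decide) (by decide) s)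
      · exact absurd (show ((-4 : ℤ) : ZMod p) * S11.unit k s = 0 by push_cast; linear_combination h2 + h1) (unit_lin_ne hp hk (-4 : ℤ) (by decide) (by decide) s)
      · exact absurd (show ((-2 : ℤ) : ZMod p) * S11.unit k s = 0 by push_cast; linear_combination -h2 + h1) (unit_lin_ne hp hk (-2 : ℤ) (by decide) (by decide) s)
      · exact absurd (show ((-5 : ℤ) : ZMod p) * S11.unit k s = 0 by push_cast; linear_combination h2 + h1) (unit_lin_ne hp hk (-5 : ℤ) (by decide) (by decide) s)
      · exact absurd (show ((-1 : ℤ) : ZMod p) * S11.unit k s = 0 by push_cast; linear_combination -h2 + h1) (unit_lin_ne hp hk (-1 : ℤ) (by decide) (by decide) s)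
      · exact absurd (show ((-1 : ℤ) : ZMod p) * S11.unit k s = 0 by push_cast; linear_combination h2 - h1) (unit_lin_ne hp hk (-1 : ℤ) (by decide) (by decide) s)
      · exact absurd (show ((1 : ℤ) : ZMod p) * S11.unit k s = 0 by push_cast; linear_combination -h2 - h1) (unit_lin_ne hp hk (1 : ℤ) (by decide) (by decide) s)
      · exact absurd (show ((-2 : ℤ) : ZMod p) * S11.unit k s = 0 by push_cast; linear_combination h2 - h1) (unit_lin_ne hp hk (-2 : ℤ) (by decide) (by decide) s)
      · exact absurd (show ((2 : ℤ) : ZMod p) * S11.unit k s = 0 by push_cast; linear_combination -h2 - h1) (unit_lin_ne hp hk (2 : ℤ) (by decide) (by decide) s)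
      · exact absurd (show ((-5 : ℤ) : ZMod p) * S11.unit k s = 0 by push_cast; linear_combination h2 + h1) (unit_lin_ne hp hk (-5 : ℤ) (by decide) (by decide) s)
      · exact absurd (show ((-3 : ℤ) : ZMod p) * S11.unit k s = 0 by push_cast; linear_combination -h2 + h1) (unit_lin_ne hp hk (-3 : ℤ) (by decide) (by decide) s)
      · exact absurd (show ((-6 : ℤ) : ZMod p) * S11.unit k s = 0 by push_cast; linear_combination h2 + h1) (unit_lin_ne hp hk (-6 : ℤ) (by decide) (by decide) s)
      · exact absurd (show ((-2 : ℤ) : ZMod p) * S11.unit k s = 0 by push_cast; linear_combination -h2 + h1) (unit_lin_ne hp hk (-2 : ℤ) (by decide) (by decide) s)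
    · rw [adj_cross_iff hss] at h1 h2
      exact absurd (show ((2 : ℤ) : ZMod p) * S11.unit k s = 0 by push_cast; linear_combination h2 - h1) (unit_lin_ne hp hk (2 : ℤ) (by decide) (by decide) s)
  · rintro rfl
    constructor
    · rw [adj_same_iff hp hk]; left; ring
    · rw [adj_same_iff hp hk]; right; left; ring


omit hp hk in
lemma zmod2_ne_add_one (t : ZMod 2) : t ≠ t + 1 := by revert t; decide

omit hp hk in
lemma zmod_ind (Q : ZMod p → Prop) (h0 : Q 0) (hs : ∀ x, Q x → Q (x + 1)) : ∀ x, Q x := by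
  intro x
  obtain ⟨n, rfl⟩ : ∃ n : ℕ, (n : ZMod p) = x := ⟨x.val, ZMod.natCast_rightInverse x⟩
  induction n with
  | zero => exact_mod_cast h0
  | succ n ih => push_cast; exact hs _ ih

/-- an adjacent pair with no common neighbour is a spoke -/
lemma cross_of_no_common {u' v' : ZMod 2 × ZMod p} (hadj : (Y p k).Adj u' v')
    (hnc : ∀ z, ¬((Y p k).Adj u' z ∧ (Y p k).Adj v' z)) :
    u'.1 ≠ v'.1 ∧ u'.2 = v'.2 := by
  obtain ⟨s, a⟩ := u'
  obtain ⟨s2, b⟩ := v'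
  rcases eq_or_ne s s2 with rfl | h
  · exfalso
    rw [adj_same_iff hp hk] at hadj
    rcases hadj with h1|h1|h1|h1
    · have hb : b = a + unit k s := by linear_combination h1
      subst hb
      exact hnc (s, a + 2 * unit k s) ((common_unit_iff hp hk s a _).2 (Or.inl rfl))
    · have ha : a = b + unit k s := by linear_combination h1
      subst ha
      have hc := (common_unit_iff hp hk s b _).2 (Or.inl rfl)
      exact hnc (s, b + 2 * unit k s) ⟨hc.2, hc.1⟩
    · have hb : b = a + 2 * unit k s := by linear_combination h1
      subst hb
      exact hnc (s, a + unit k s) ((common_2unit_iff hp hk s a _).2 rfl)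
    · have ha : a = b + 2 * unit k s := by linear_combination h1
      subst ha
      have hc := (common_2unit_iff hp hk s b _).2 rfl
      exact hnc (s, b + unit k s) ⟨hc.2, hc.1⟩
  · refine ⟨h, ?_⟩
    rwa [adj_cross_iff h] at hadj

/-- an adjacent pair with two distinct common neighbours is a unit-step edge -/
lemma unit_of_two_common {u' v' : ZMod 2 × ZMod p} (hadj : (Y p k).Adj u' v')
    (h2 : ∃ z w, z ≠ w ∧ ((Y p k).Adj u' z ∧ (Y p k).Adj v' z) ∧
        ((Y p k).Adj u' w ∧ (Y p k).Adj v' w)) :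
    u'.1 = v'.1 ∧ (v'.2 - u'.2 = unit k u'.1 ∨ u'.2 - v'.2 = unit k u'.1) := by
  obtain ⟨s, a⟩ := u'
  obtain ⟨s2, b⟩ := v'
  rcases eq_or_ne s s2 with rfl | h
  · refine ⟨rfl, ?_⟩
    rw [adj_same_iff hp hk] at hadj
    rcases hadj with h1|h1|h1|h1
    · exact Or.inl h1
    · exact Or.inr h1
    · exfalso
      obtain ⟨z, w, hzw, hz, hw⟩ := h2
      have hb : b = a + 2 * unit k s := by linear_combination h1
      subst hb
      have e1 := (common_2unit_iff hp hk s a z).1 hz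
      have e2 := (common_2unit_iff hp hk s a w).1 hw
      exact hzw (e1.trans e2.symm)
    · exfalso
      obtain ⟨z, w, hzw, hz, hw⟩ := h2
      have ha : a = b + 2 * unit k s := by linear_combination h1
      subst ha
      have e1 := (common_2unit_iff hp hk s b z).1 ⟨hz.2, hz.1⟩
      have e2 := (common_2unit_iff hp hk s b w).1 ⟨hw.2, hw.1⟩
      exact hzw (e1.trans e2.symm)
  · exfalso
    obtain ⟨z, w, hzw, hz, hw⟩ := h2
    rw [adj_cross_iff h] at hadj
    subst hadj
    exact spoke_no_common h a z hz

/-- every unit edge has two distinct common neighbours -/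
lemma unit_has_two (s : ZMod 2) (x : ZMod p) :
    ∃ z w, z ≠ w ∧ ((Y p k).Adj (s,x) z ∧ (Y p k).Adj (s, x + unit k s) z) ∧
      ((Y p k).Adj (s,x) w ∧ (Y p k).Adj (s, x + unit k s) w) := by
  refine ⟨(s, x + 2 * unit k s), (s, x - unit k s), ?_,
    (common_unit_iff hp hk s x _).2 (Or.inl rfl), (common_unit_iff hp hk s x _).2 (Or.inr rfl)⟩
  intro hzw
  have h3 : x + 2 * unit k s = x - unit k s := (Prod.mk.injEq _ _ _ _ ▸ hzw).2
  exact unit_lin_ne hp hk (3 : ℤ) (by decide) (by decide) s (by push_cast; linear_combination h3)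

lemma aut_spoke' {α : Equiv.Perm (ZMod 2 × ZMod p)} (hα : α ∈ autSubgroup (Y p k))
    (t : ZMod 2) (x : ZMod p) :
    (α (t,x)).1 ≠ (α (t+1,x)).1 ∧ (α (t,x)).2 = (α (t+1,x)).2 := by
  apply cross_of_no_common hp hk
  · exact (hα _ _).2 ((adj_cross_iff (zmod2_ne_add_one t) x x).2 rfl)
  · intro z hz
    apply spoke_no_common (zmod2_ne_add_one t) x (α⁻¹ z)
    constructor
    · exact (hα (t,x) (α⁻¹ z)).1 (by simpa using hz.1)
    · exact (hα (t+1,x) (α⁻¹ z)).1 (by simpa using hz.2)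

lemma aut_unit_step {α : Equiv.Perm (ZMod 2 × ZMod p)} (hα : α ∈ autSubgroup (Y p k))
    (s : ZMod 2) (x : ZMod p) :
    (α (s,x)).1 = (α (s, x + unit k s)).1 ∧
    ((α (s, x + unit k s)).2 - (α (s,x)).2 = unit k ((α (s,x)).1) ∨
     (α (s,x)).2 - (α (s, x + unit k s)).2 = unit k ((α (s,x)).1)) := by
  apply unit_of_two_common hp hk
  · refine (hα _ _).2 ?_
    rw [adj_same_iff hp hk]
    left; ring
  · obtain ⟨z, w, hzw, hz, hw⟩ := unit_has_two hp hk s x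
    exact ⟨α z, α w, fun h => hzw (α.injective h),
      ⟨(hα _ _).2 hz.1, (hα _ _).2 hz.2⟩, ⟨(hα _ _).2 hw.1, (hα _ _).2 hw.2⟩⟩

lemma aut_form {α : Equiv.Perm (ZMod 2 × ZMod p)} (hα : α ∈ autSubgroup (Y p k)) :
    ∃ (t₀ : ZMod 2) (β : ZMod p → ZMod p), Function.Injective β ∧
      ∀ s x, α (s, x) = (s + t₀, β x) := by
  have hside : ∀ x : ZMod p, (α (0,x)).1 = (α (0,0)).1 := by
    apply zmod_ind
    · rfl
    · intro x ih
      have h := (aut_unit_step hp hk hα 0 x).1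
      have hu : unit k (0 : ZMod 2) = 1 := rfl
      rw [hu] at h
      rw [← h]
      exact ih
  refine ⟨(α (0,0)).1, fun x => (α (0,x)).2, ?_, ?_⟩
  · intro x y hxy
    have hx : α (0,x) = α (0,y) := by
      have h1 := hside x
      have h2 := hside y
      have : (α (0,x)).1 = (α (0,y)).1 := h1.trans h2.symm
      exact Prod.ext this hxy
    simpa using α.injective hx
  · intro s x
    rcases two_cases s with rfl | rfl
    · exact Prod.ext (by simpa using hside x) rfl
    · have h := aut_spoke' hp hk hα 0 x
      have h1 : (α (1,x)).1 = (α (0,x)).1 + 1 := ne_iff_add_one.1 h.1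
      refine Prod.ext ?_ h.2.symm
      rw [h1, hside x]
      ring

lemma affine_of_steps (β : ZMod p → ZMod p) (hinj : Function.Injective β) (e' : ZMod p)
    (he : e' ≠ 0) (hstep : ∀ x, β (x + 1) = β x + e' ∨ β (x + 1) = β x - e') :
    (∀ x, β x = β 0 + x * e') ∨ (∀ x, β x = β 0 - x * e') := by
  have h2 : ((2 : ℤ) : ZMod p) ≠ 0 := by
    have := keyNe hp hk 2 0 (by decide) (by decide) (by decide)
    simpa using this
  have hPstep : ∀ x, (β (x + 1) = β x + e') → (β (x + 1 + 1) = β (x + 1) + e') := by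
    intro x hx
    rcases hstep (x + 1) with h | h
    · exact h
    · exfalso
      have : β (x + 1 + 1) = β x := by rw [h, hx]; ring
      have h4 := hinj this
      have : ((2 : ℤ) : ZMod p) = 0 := by push_cast; linear_combination h4
      exact h2 this
  have hNstep : ∀ x, (β (x + 1) = β x - e') → (β (x + 1 + 1) = β (x + 1) - e') := by
    intro x hx
    rcases hstep (x + 1) with h | h
    · exfalso
      have : β (x + 1 + 1) = β x := by rw [h, hx]; ring
      have h4 := hinj this
      have : ((2 : ℤ) : ZMod p) = 0 := by push_cast; linear_combination h4
      exact h2 this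
    · exact h
  rcases hstep 0 with h0 | h0
  · left
    have hall : ∀ x, β (x + 1) = β x + e' := zmod_ind _ h0 hPstep
    apply zmod_ind (fun x => β x = β 0 + x * e')
    · ring
    · intro x ih
      rw [hall x, ih]; ring
  · right
    have hall : ∀ x, β (x + 1) = β x - e' := zmod_ind _ h0 hNstep
    apply zmod_ind (fun x => β x = β 0 - x * e')
    · ring
    · intro x ih
      rw [hall x, ih]; ring

lemma aut_struct {α : Equiv.Perm (ZMod 2 × ZMod p)} (hα : α ∈ autSubgroup (Y p k)) :
    ∃ (t₀ : ZMod 2) (b ε : ZMod p), (ε = 1 ∨ ε = -1) ∧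
      ∀ s x, α (s, x) = (s + t₀, b + x * (ε * unit k t₀)) := by
  obtain ⟨t₀, β, hinj, hform⟩ := aut_form hp hk hα
  have hstep : ∀ x, β (x + 1) = β x + unit k t₀ ∨ β (x + 1) = β x - unit k t₀ := by
    intro x
    have h := aut_unit_step hp hk hα 0 x
    have hu : unit k (0 : ZMod 2) = 1 := rfl
    rw [hu, hform 0 x, hform 0 (x + 1)] at h
    simp only [zero_add] at h
    rcases h.2 with h2 | h2
    · left; linear_combination h2
    · right; linear_combination -h2
  rcases affine_of_steps hp hk β hinj (unit k t₀) (unit_ne_zero hp hk t₀) hstep with hc | hc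
  · exact ⟨t₀, β 0, 1, Or.inl rfl, fun s x => by
      rw [hform s x, hc x]; exact Prod.ext rfl (by ring)⟩
  · exact ⟨t₀, β 0, -1, Or.inr rfl, fun s x => by
      rw [hform s x, hc x]; exact Prod.ext rfl (by ring)⟩

omit hp hk in
lemma pow_apply_succ (α : Equiv.Perm (ZMod 2 × ZMod p)) (n : ℕ) (v : ZMod 2 × ZMod p) :
    (α ^ (n + 1)) v = (α ^ n) (α v) := by
  rw [pow_succ, Equiv.Perm.mul_apply]

omit hk in
lemma two_ne_zero' : (2 : ZMod p) ≠ 0 := by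
  have h1 : ((2:ℕ) : ZMod p) ≠ 0 := by
    rw [Ne, ZMod.natCast_eq_zero_iff]
    intro hdvd
    have := Nat.le_of_dvd (by norm_num) hdvd
    omega
  exact_mod_cast h1

omit hp hk in
lemma zmod2_add_two (s : ZMod 2) : s + 1 + 1 = s := by revert s; decide

/-- L-A : automorphisms of order dividing 2 have a fixed point -/
lemma fixed_of_sq {α : Equiv.Perm (ZMod 2 × ZMod p)} (hα : α ∈ autSubgroup (Y p k))
    (hsq : α * α = 1) : ∃ v, α v = v := by
  have happ : ∀ v, α (α v) = v := by
    intro v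
    have h : (α * α) v = (1 : Equiv.Perm (ZMod 2 × ZMod p)) v := by rw [hsq]
    simpa [Equiv.Perm.mul_apply] using h
  obtain ⟨t₀, b, ε, hε, hf⟩ := aut_struct hp hk hα
  have h2 : (2 : ZMod p) ≠ 0 := two_ne_zero' hp
  rcases two_cases t₀ with rfl | rfl
  · have hu : unit k (0 : ZMod 2) = 1 := rfl
    rcases hε with rfl | rfl
    · -- translation; α ∘ α = id forces b = 0
      have e1 := happ (0, 0)
      rw [hf 0 0, hf] at e1
      have e1s := congrArg Prod.snd e1
      simp only [hu] at e1s
      have hb : b = 0 := by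
        have h2b : (2 : ZMod p) * b = 0 := by linear_combination e1s
        rcases mul_eq_zero.1 h2b with h | h
        · exact absurd h h2
        · exact h
      refine ⟨(0, 0), ?_⟩
      rw [hf 0 0, hb]
      exact Prod.ext (by ring) (by ring)
    · -- reflection x ↦ b - x
      refine ⟨(0, b * (2 : ZMod p)⁻¹), ?_⟩
      rw [hf]
      refine Prod.ext (by ring) ?_
      simp only [hu]
      have : (2 : ZMod p) * ((2:ZMod p)⁻¹ * b) = b := by
        rw [← mul_assoc, mul_inv_cancel₀ h2, one_mul]
      linear_combination -this
  · -- side-swapping: impossible for involutions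
    exfalso
    have hu : unit k (1 : ZMod 2) = k := rfl
    have e1 := happ (0, 0)
    have e2 := happ (0, 1)
    rw [hf 0 0, hf] at e1
    rw [hf 0 1, hf] at e2
    have e1s := congrArg Prod.snd e1
    have e2s := congrArg Prod.snd e2
    simp only [hu] at e1s e2s
    rcases hε with rfl | rfl
    · exact h2 (by linear_combination e1s - e2s + hk)
    · exact h2 (by linear_combination e1s - e2s + hk)

omit hp hk in
lemma translation_pow {α : Equiv.Perm (ZMod 2 × ZMod p)} {c : ZMod p}
    (hf : ∀ s x, α (s, x) = (s, x + c)) :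
    ∀ (n : ℕ) (s : ZMod 2) (x : ZMod p), (α ^ n) (s, x) = (s, x + (n : ZMod p) * c) := by
  intro n
  induction n with
  | zero => intro s x; simp
  | succ n ih =>
    intro s x
    rw [pow_apply_succ, hf s x, ih]
    push_cast
    exact Prod.ext rfl (by ring)

/-- L-C : order trichotomy -/
lemma order_cases {α : Equiv.Perm (ZMod 2 × ZMod p)} (hα : α ∈ autSubgroup (Y p k)) :
    α ^ 2 = 1 ∨ α ^ 4 = 1 ∨ α ^ p = 1 := by
  obtain ⟨t₀, b, ε, hε, hf⟩ := aut_struct hp hk hα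
  rcases two_cases t₀ with rfl | rfl
  · have hu : unit k (0 : ZMod 2) = 1 := rfl
    rcases hε with rfl | rfl
    · -- translation
      right; right
      have hf' : ∀ s x, α (s, x) = (s, x + b) := by
        intro s x; rw [hf s x]; exact Prod.ext (by ring) (by simp [hu]; ring)
      apply Equiv.ext
      rintro ⟨s, x⟩
      rw [translation_pow hf' p s x, ZMod.natCast_self]
      simp
    · -- reflection
      left
      apply Equiv.ext
      rintro ⟨s, x⟩
      have : (α ^ 2) (s, x) = α (α (s, x)) := by rw [pow_apply_succ, pow_one]
      rw [this, hf s x, hf]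
      simp only [hu, Equiv.Perm.one_apply]
      exact Prod.ext (by ring) (by ring)
  · -- side swap: order 4
    right; left
    have hu : unit k (1 : ZMod 2) = k := rfl
    have hsq : ∀ s x, α (α (s, x)) = (s, (b + b * (ε * k)) - x) := by
      intro s x
      rw [hf s x, hf]
      refine Prod.ext (zmod2_add_two s) ?_
      simp only [hu]
      rcases hε with rfl | rfl
      · linear_combination x * hk
      · linear_combination x * hk
    apply Equiv.ext
    rintro ⟨s, x⟩
    have h4 : (α ^ 4) (s, x) = α (α (α (α (s, x)))) := by
      rw [pow_apply_succ, pow_apply_succ, pow_apply_succ, pow_apply_succ, pow_zero]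
      simp
    rw [h4, hsq, hsq]
    simp only [Equiv.Perm.one_apply]
    exact Prod.ext rfl (by ring)

/-- L-B : fixed-point-free automorphisms with `α ^ p = 1` are nontrivial translations -/
lemma translation_of_fpf {α : Equiv.Perm (ZMod 2 × ZMod p)} (hα : α ∈ autSubgroup (Y p k))
    (hpow : α ^ p = 1) (hfpf : ∀ v, α v ≠ v) :
    ∃ c : ZMod p, c ≠ 0 ∧ ∀ s x, α (s, x) = (s, x + c) := by
  obtain ⟨t₀, b, ε, hε, hf⟩ := aut_struct hp hk hα
  have hodd : p % 2 = 1 := Nat.odd_iff.1 ((Fact.out : Nat.Prime p).odd_of_ne_two (by omega))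
  rcases two_cases t₀ with rfl | rfl
  · have hu : unit k (0 : ZMod 2) = 1 := rfl
    rcases hε with rfl | rfl
    · -- translation
      refine ⟨b, ?_, ?_⟩
      · intro hb0
        apply hfpf (0, 0)
        rw [hf 0 0, hb0]
        exact Prod.ext (by ring) (by simp [hu])
      · intro s x; rw [hf s x]; exact Prod.ext (by ring) (by simp [hu]; ring)
    · -- reflection: α² = 1, α^p = 1, p odd ⇒ α = 1, contradicting fpf
      exfalso
      have hsq : α ^ 2 = 1 := by
        apply Equiv.ext
        rintro ⟨s, x⟩
        have : (α ^ 2) (s, x) = α (α (s, x)) := by rw [pow_apply_succ, pow_one]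
        rw [this, hf s x, hf]
        simp only [hu, Equiv.Perm.one_apply]
        exact Prod.ext (by ring) (by ring)
      have hα1 : α = 1 := by
        have hdecomp : 2 * (p / 2) + 1 = p := by omega
        calc α = (α ^ 2) ^ (p / 2) * α := by rw [hsq]; simp
        _ = α ^ (2 * (p / 2) + 1) := by rw [← pow_mul, ← pow_succ]
        _ = α ^ p := by rw [hdecomp]
        _ = 1 := hpow
      apply hfpf (0, 0)
      rw [hα1]
      rfl
  · -- side swap contradicts α^p = 1 since p is odd
    exfalso
    have hside : ∀ (n : ℕ) (s : ZMod 2) (x : ZMod p), ∃ y, (α ^ n) (s, x) = (s + (n : ZMod 2), y) := by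
      intro n
      induction n with
      | zero => intro s x; exact ⟨x, by simp⟩
      | succ n ih =>
        intro s x
        rw [pow_apply_succ, hf s x]
        obtain ⟨y, hy⟩ := ih (s + 1) (b + x * (ε * unit k 1))
        refine ⟨y, ?_⟩
        rw [hy]
        push_cast
        exact Prod.ext (by ring) rfl
    obtain ⟨y, hy⟩ := hside p 0 0
    rw [hpow] at hy
    have h0 : ((p : ZMod 2)) = 0 := by
      have h := congrArg Prod.fst hy
      simp only [Equiv.Perm.one_apply] at h
      simpa using h.symm
    rw [show ((p : ZMod 2)) = ((p % 2 : ℕ) : ZMod 2) from (ZMod.natCast_mod p 2).symm, hodd] at h0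
    exact absurd h0 (by decide)

omit hp hk in
lemma mem_aut {α : Equiv.Perm (ZMod 2 × ZMod p)} :
    α ∈ autSubgroup (Y p k) ↔
      ∀ u v, (Y p k).Adj (α u) (α v) ↔ (Y p k).Adj u v := Iff.rfl

lemma adj_shift (s t : ZMod 2) (x y c : ZMod p) :
    (Y p k).Adj (s, x + c) (t, y + c) ↔ (Y p k).Adj (s, x) (t, y) := by
  rcases eq_or_ne s t with rfl | h
  · rw [adj_same_iff hp hk, adj_same_iff hp hk]
    constructor <;> intro h <;> rcases h with h|h|h|h
    · left; linear_combination h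
    · right; left; linear_combination h
    · right; right; left; linear_combination h
    · right; right; right; linear_combination h
    · left; linear_combination h
    · right; left; linear_combination h
    · right; right; left; linear_combination h
    · right; right; right; linear_combination h
  · rw [adj_cross_iff h, adj_cross_iff h]
    exact add_left_inj c

def tau (c : ZMod p) : Equiv.Perm (ZMod 2 × ZMod p) :=
  (Equiv.refl (ZMod 2)).prodCongr (Equiv.addRight c)

omit hp hk in
lemma tau_apply (c : ZMod p) (s : ZMod 2) (x : ZMod p) : tau c (s, x) = (s, x + c) := rfl

lemma tau_mem (c : ZMod p) : tau c ∈ autSubgroup (Y p k) := by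
  rw [mem_aut]
  rintro ⟨s, x⟩ ⟨t, y⟩
  rw [tau_apply, tau_apply]
  exact adj_shift hp hk s t x y c

def sigma (hk0 : k ≠ 0) : Equiv.Perm (ZMod 2 × ZMod p) :=
  (Equiv.addRight (1 : ZMod 2)).prodCongr (Equiv.mulLeft₀ k hk0)

omit hp hk in
lemma sigma_apply (hk0 : k ≠ 0) (s : ZMod 2) (x : ZMod p) :
    sigma hk0 (s, x) = (s + 1, k * x) := rfl

lemma sigma_mem (hk0 : k ≠ 0) : sigma hk0 ∈ autSubgroup (Y p k) := by
  rw [mem_aut]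
  rintro ⟨s, x⟩ ⟨t, y⟩
  rw [sigma_apply, sigma_apply]
  rcases eq_or_ne s t with rfl | h
  · rw [adj_same_iff hp hk, adj_same_iff hp hk]
    rcases two_cases s with rfl | rfl
    · have hu0 : unit k (0 : ZMod 2) = 1 := rfl
      have hu1 : unit k ((0 : ZMod 2) + 1) = k := rfl
      rw [hu0, hu1]
      constructor <;> intro h <;> rcases h with h|h|h|h
      · left; exact mul_left_cancel₀ hk0 (by linear_combination h)
      · right; left; exact mul_left_cancel₀ hk0 (by linear_combination h)
      · right; right; left; exact mul_left_cancel₀ hk0 (by linear_combination h)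
      · right; right; right; exact mul_left_cancel₀ hk0 (by linear_combination h)
      · left; linear_combination k * h
      · right; left; linear_combination k * h
      · right; right; left; linear_combination k * h
      · right; right; right; linear_combination k * h
    · have hu1 : unit k (1 : ZMod 2) = k := rfl
      have hu0 : unit k ((1 : ZMod 2) + 1) = 1 := rfl
      rw [hu0, hu1]
      constructor <;> intro h <;> rcases h with h|h|h|h
      · right; left; linear_combination k * h + (x - y) * hk
      · left; linear_combination k * h + (y - x) * hk
      · right; right; right; linear_combination k * h + (x - y) * hk
      · right; right; left; linear_combination k * h + (y - x) * hk
      · right; left; linear_combination -(k * h) - hk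
      · left; linear_combination -(k * h) - hk
      · right; right; right; linear_combination -(k * h) - 2 * hk
      · right; right; left; linear_combination -(k * h) - 2 * hk
  · have h' : s + 1 ≠ t + 1 := fun hc => h (by
      have := congrArg (fun z => z + 1) hc
      simpa [zmod2_add_two] using this)
    rw [adj_cross_iff h', adj_cross_iff h]
    constructor
    · exact fun hc => mul_left_cancel₀ hk0 hc
    · exact fun hc => by rw [hc]

lemma vtrans : ∀ u v : ZMod 2 × ZMod p, ∃ g ∈ autSubgroup (Y p k), g u = v := by
  rintro ⟨s, x⟩ ⟨t, y⟩
  rcases eq_or_ne s t with rfl | h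
  · exact ⟨tau (y - x), tau_mem hp hk _, by rw [tau_apply]; exact Prod.ext rfl (by ring)⟩
  · have hk0 := k_ne_zero hp hk
    refine ⟨tau (y - k * x) * sigma hk0, mul_mem (tau_mem hp hk _) (sigma_mem hp hk hk0), ?_⟩
    rw [Equiv.Perm.mul_apply, sigma_apply, tau_apply]
    exact Prod.ext (ne_iff_add_one.1 h).symm (by ring)

lemma not_cayley :
    ¬ (∃ H : Subgroup (Equiv.Perm (ZMod 2 × ZMod p)), H ≤ autSubgroup (Y p k) ∧
        ∀ u v : ZMod 2 × ZMod p, ∃! g : H, (g : Equiv.Perm (ZMod 2 × ZMod p)) u = v) := by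
  rintro ⟨H, hle, hreg⟩
  haveI : Fintype H := Fintype.ofFinite H
  have hbij : Function.Bijective
      (fun g : H => ((g : Equiv.Perm (ZMod 2 × ZMod p)) ((0 : ZMod 2), (0 : ZMod p)))) := by
    constructor
    · intro g1 g2 hg
      obtain ⟨g0, hg0, huniq⟩ := hreg ((0 : ZMod 2), (0 : ZMod p))
        ((g1 : Equiv.Perm (ZMod 2 × ZMod p)) ((0 : ZMod 2), (0 : ZMod p)))
      exact (huniq g1 rfl).trans (huniq g2 hg.symm).symm
    · intro v
      obtain ⟨g, hg, -⟩ := hreg ((0 : ZMod 2), (0 : ZMod p)) v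
      exact ⟨g, hg⟩
  have hcard : Fintype.card H = Fintype.card (ZMod 2 × ZMod p) :=
    Fintype.card_of_bijective hbij
  have h2dvd : 2 ∣ Fintype.card H := by
    rw [hcard, Fintype.card_prod, ZMod.card, ZMod.card]
    exact ⟨p, rfl⟩
  obtain ⟨g, hg⟩ := exists_prime_orderOf_dvd_card 2 h2dvd
  have hg1 : g ≠ 1 := by
    intro h
    rw [h, orderOf_one] at hg
    omega
  have hgsq : g * g = 1 := by
    have h1 := pow_orderOf_eq_one g
    rw [hg, pow_two] at h1
    exact h1
  have hmem : (g : Equiv.Perm (ZMod 2 × ZMod p)) ∈ autSubgroup (Y p k) := hle g.2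
  have hsq' : (g : Equiv.Perm (ZMod 2 × ZMod p)) * (g : Equiv.Perm (ZMod 2 × ZMod p)) = 1 := by
    have := congrArg (fun z : H => (z : Equiv.Perm (ZMod 2 × ZMod p))) hgsq
    simpa using this
  obtain ⟨v, hv⟩ := fixed_of_sq hp hk hmem hsq'
  obtain ⟨g0, hg0, huniq⟩ := hreg v v
  exact hg1 ((huniq g hv).trans (huniq 1 (by simp)).symm)

end Main

/-- the zigzag Hamilton path `0 → m` in the circulant on `ZMod q` with steps `{±1, ±2}` -/
def Psi (q m j : ℕ) : ℕ :=
  if j < m then j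
  else if j - m + 1 ≤ (q - m) / 2 then m + 2 * (j - m + 1) - 1
  else m + 2 * ((q - m) - (j - m + 1))

lemma Psi_lt {q m j : ℕ} (hm : 1 ≤ m) (hmq : m < q) (hj : j < q) : Psi q m j < q := by
  simp only [Psi]; split_ifs <;> omega

lemma Psi_zero {q m : ℕ} (hm : 1 ≤ m) : Psi q m 0 = 0 := by
  simp only [Psi]; split_ifs <;> omega

lemma Psi_last {q m : ℕ} (hm : 1 ≤ m) (hmq : m < q) : Psi q m (q - 1) = m := by
  simp only [Psi]; split_ifs <;> omega

lemma Psi_step {q m j : ℕ} (hm : 1 ≤ m) (hmq : m < q) (hj : j + 1 < q) :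
    Psi q m (j + 1) = Psi q m j + 1 ∨ Psi q m j = Psi q m (j + 1) + 1 ∨
    Psi q m (j + 1) = Psi q m j + 2 ∨ Psi q m j = Psi q m (j + 1) + 2 := by
  simp only [Psi]; split_ifs <;> omega

lemma Psi_inj {q m : ℕ} (hm : 1 ≤ m) (hmq : m < q) {j1 j2 : ℕ} (h1 : j1 < q) (h2 : j2 < q)
    (he : Psi q m j1 = Psi q m j2) : j1 = j2 := by
  simp only [Psi] at he; split_ifs at he <;> omega

/-- the Hamilton cycle of `Y p k` -/
def cyc (p : ℕ) [NeZero p] (k : ZMod p) : ZMod (Fintype.card (ZMod 2 × ZMod p)) → ZMod 2 × ZMod p :=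
  fun i =>
    if i.val < p then ((0 : ZMod 2), ((Psi p (ZMod.val k) i.val : ℕ) : ZMod p))
    else ((1 : ZMod 2), k * ((Psi p 1 (2 * p - 1 - i.val) : ℕ) : ZMod p))

section Main2

variable {p : ℕ} [Fact (Nat.Prime p)] (hp : 113 < p) {k : ZMod p} (hk : k * k = -1)

lemma card_eq : Fintype.card (ZMod 2 × ZMod p) = 2 * p := by
  rw [Fintype.card_prod, ZMod.card, ZMod.card]

instance : NeZero (Fintype.card (ZMod 2 × ZMod p)) :=
  ⟨by rw [card_eq]; exact Nat.mul_ne_zero two_ne_zero (NeZero.ne p)⟩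

include hp hk

omit hp hk in
lemma val_lt_n (i : ZMod (Fintype.card (ZMod 2 × ZMod p))) : i.val < 2 * p := by
  have h1 := ZMod.val_lt i
  have h2 := card_eq (p := p)
  omega

omit hp hk in
lemma succ_val {i : ZMod (Fintype.card (ZMod 2 × ZMod p))} (h : i.val + 1 < 2 * p) :
    (i + 1).val = i.val + 1 := by
  have h1 : ((i.val + 1 : ℕ) : ZMod (Fintype.card (ZMod 2 × ZMod p))) = i + 1 := by
    push_cast
    rw [ZMod.natCast_rightInverse i]
  rw [← h1, ZMod.val_cast_of_lt (by have := card_eq (p := p); omega)]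

omit hp hk in
lemma wrap_val {i : ZMod (Fintype.card (ZMod 2 × ZMod p))} (h : i.val = 2 * p - 1) :
    i + 1 = 0 := by
  have h1 : ((i.val : ℕ) : ZMod (Fintype.card (ZMod 2 × ZMod p))) = i :=
    ZMod.natCast_rightInverse i
  rw [← h1, h]
  have h2 : ((2 * p - 1 : ℕ) : ZMod (Fintype.card (ZMod 2 × ZMod p))) + 1 =
      (((2 * p - 1) + 1 : ℕ) : ZMod (Fintype.card (ZMod 2 × ZMod p))) := by push_cast; ring
  rw [h2, show (2 * p - 1) + 1 = 2 * p by have := NeZero.ne p; omega, ← card_eq,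
    ZMod.natCast_self]

omit hp hk in
lemma cyc_lo {i : ZMod (Fintype.card (ZMod 2 × ZMod p))} (h : i.val < p) :
    cyc p k i = ((0 : ZMod 2), ((Psi p (ZMod.val k) i.val : ℕ) : ZMod p)) := by
  simp only [cyc]; rw [if_pos h]

omit hp hk in
lemma cyc_hi {i : ZMod (Fintype.card (ZMod 2 × ZMod p))} (h : ¬ i.val < p) :
    cyc p k i = ((1 : ZMod 2), k * ((Psi p 1 (2 * p - 1 - i.val) : ℕ) : ZMod p)) := by
  simp only [cyc]; rw [if_neg h]

omit hk in
lemma cast_inj_lt {a b : ℕ} (ha : a < p) (hb : b < p) (h : (a : ZMod p) = b) : a = b := by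
  have := congrArg ZMod.val h
  rwa [ZMod.val_cast_of_lt ha, ZMod.val_cast_of_lt hb] at this

lemma kval_pos : 1 ≤ k.val := by
  have h0 : k.val ≠ 0 := fun hh => (k_ne_zero hp hk) ((ZMod.val_eq_zero k).1 hh)
  omega

lemma cyc_bij : Function.Bijective (cyc p k) := by
  rw [Fintype.bijective_iff_injective_and_card]
  constructor
  · have hm1 : 1 ≤ k.val := kval_pos hp hk
    have hmq : k.val < p := ZMod.val_lt k
    intro i j hij
    have hin := val_lt_n i
    have hjn := val_lt_n j
    by_cases hi : i.val < p <;> by_cases hj : j.val < p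
    · rw [cyc_lo hi, cyc_lo hj] at hij
      have h2 := congrArg Prod.snd hij
      simp only at h2
      have h3 := cast_inj_lt hp (Psi_lt hm1 hmq hi) (Psi_lt hm1 hmq hj) h2
      have h4 := Psi_inj hm1 hmq hi hj h3
      exact ZMod.val_injective _ h4
    · exfalso
      rw [cyc_lo hi, cyc_hi hj] at hij
      have h2 := congrArg Prod.fst hij
      simp only at h2
      exact absurd h2 (by decide)
    · exfalso
      rw [cyc_hi hi, cyc_lo hj] at hij
      have h2 := congrArg Prod.fst hij
      simp only at h2
      exact absurd h2 (by decide)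
    · rw [cyc_hi hi, cyc_hi hj] at hij
      have h2 := congrArg Prod.snd hij
      simp only at h2
      have h3 := mul_left_cancel₀ (k_ne_zero hp hk) h2
      have hb1 : 2 * p - 1 - i.val < p := by omega
      have hb2 : 2 * p - 1 - j.val < p := by omega
      have hp1 : (1 : ℕ) < p := by omega
      have h4 := cast_inj_lt hp (Psi_lt (le_refl 1) hp1 hb1) (Psi_lt (le_refl 1) hp1 hb2) h3
      have h5 := Psi_inj (le_refl 1) hp1 hb1 hb2 h4
      have h6 : i.val = j.val := by omega
      exact ZMod.val_injective _ h6
  · rw [ZMod.card]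

lemma cyc_adj : ∀ i, (Y p k).Adj (cyc p k i) (cyc p k (i + 1)) := by
  have hm1 : 1 ≤ k.val := kval_pos hp hk
  have hmq : k.val < p := ZMod.val_lt k
  have hp1 : (1:ℕ) < p := by omega
  have hkcast : ((k.val : ℕ) : ZMod p) = k := ZMod.natCast_rightInverse k
  intro i
  have hiv := val_lt_n i
  rcases lt_trichotomy (i.val + 1) p with hA | hB | hC
  · -- inside the side-0 path
    have hsucc : (i + 1).val = i.val + 1 := succ_val (by omega)
    rw [cyc_lo (by omega), cyc_lo (i := i + 1) (by rw [hsucc]; omega), hsucc]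
    rw [adj_same_iff hp hk, show unit k (0 : ZMod 2) = 1 from rfl]
    rcases Psi_step (q := p) (m := k.val) hm1 hmq hA with h|h|h|h <;>
      [skip; skip; skip; skip] <;>
      have hc := congrArg (Nat.cast : ℕ → ZMod p) h <;> push_cast at hc
    · left; linear_combination hc
    · right; left; linear_combination hc
    · right; right; left; linear_combination hc
    · right; right; right; linear_combination hc
  · -- the spoke from (0, k) to (1, k)
    have hiv2 : i.val = p - 1 := by omega
    have hsucc : (i + 1).val = p := by rw [succ_val (by omega), hiv2]; omega
    rw [cyc_lo (by omega), cyc_hi (i := i + 1) (by rw [hsucc]; omega), hsucc, hiv2]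
    rw [show 2 * p - 1 - p = p - 1 by omega, Psi_last hm1 hmq, Psi_last (le_refl 1) hp1]
    rw [adj_cross_iff (show (0 : ZMod 2) ≠ 1 by decide)]
    rw [hkcast]
    push_cast
    ring
  · rcases eq_or_lt_of_le (show i.val + 1 ≤ 2 * p by omega) with hD | hC2
    · -- the wrap-around spoke from (1, 0) to (0, 0)
      have hiv2 : i.val = 2 * p - 1 := by omega
      rw [wrap_val hiv2, cyc_hi (by omega), cyc_lo (i := 0) (by rw [ZMod.val_zero]; omega)]
      rw [hiv2, show 2 * p - 1 - (2 * p - 1) = 0 by omega, ZMod.val_zero,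
        Psi_zero hm1, Psi_zero (le_refl 1)]
      rw [adj_cross_iff (show (1 : ZMod 2) ≠ 0 by decide)]
      push_cast
      ring
    · -- inside the side-1 path
      have hge : p ≤ i.val := by omega
      have hsucc : (i + 1).val = i.val + 1 := succ_val (by omega)
      rw [cyc_hi (by omega), cyc_hi (i := i + 1) (by rw [hsucc]; omega), hsucc]
      rw [show 2 * p - 1 - i.val = (2 * p - 1 - (i.val + 1)) + 1 by omega]
      rw [adj_same_iff hp hk, show unit k (1 : ZMod 2) = k from rfl]
      rcases Psi_step (q := p) (m := 1) (le_refl 1) hp1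
          (show (2 * p - 1 - (i.val + 1)) + 1 < p by omega) with h|h|h|h <;>
        [skip; skip; skip; skip] <;>
        have hc := congrArg (Nat.cast : ℕ → ZMod p) h <;> push_cast at hc
      · right; left; linear_combination k * hc
      · left; linear_combination k * hc
      · right; right; right; linear_combination k * hc
      · right; right; left; linear_combination k * hc

end Main2

section Main3

variable {p : ℕ} [Fact (Nat.Prime p)] (hp : 113 < p) {k : ZMod p} (hk : k * k = -1)

include hp hk

lemma dvd_two_p {k' : ℕ} (hd : k' ∣ 2 * p) : k' = 1 ∨ k' = 2 ∨ k' = p ∨ k' = 2 * p := by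
  have pp : Nat.Prime p := Fact.out
  by_cases hpk : p ∣ k'
  · obtain ⟨t, rfl⟩ := hpk
    have ht : t ∣ 2 := by
      have h2 : p * t ∣ p * 2 := by rwa [mul_comm 2 p] at hd
      exact (Nat.mul_dvd_mul_iff_left (show 0 < p by omega)).1 h2
    rcases (Nat.dvd_prime Nat.prime_two).1 ht with rfl | rfl
    · right; right; left; omega
    · right; right; right; omega
  · have hco : Nat.Coprime k' p :=
      (Nat.coprime_comm.1 ((Nat.Prime.coprime_iff_not_dvd pp).2 hpk))
    have h2 : k' ∣ 2 := hco.dvd_of_dvd_mul_right hd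
    rcases (Nat.dvd_prime Nat.prime_two).1 h2 with rfl | rfl
    · left; rfl
    · right; left; rfl

omit hp hk in
lemma shift_pow {α : Equiv.Perm (ZMod 2 × ZMod p)}
    {c : ZMod (Fintype.card (ZMod 2 × ZMod p)) → ZMod 2 × ZMod p} {d : ℕ}
    (hshift : ∀ i, α (c i) = c (i + ((d : ℕ) : ZMod (Fintype.card (ZMod 2 × ZMod p))))) :
    ∀ (t : ℕ) (i : ZMod (Fintype.card (ZMod 2 × ZMod p))),
      (α ^ t) (c i) = c (i + ((t * d : ℕ) : ZMod (Fintype.card (ZMod 2 × ZMod p)))) := by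
  intro t
  induction t with
  | zero => intro i; simp
  | succ t ih =>
    intro i
    rw [pow_apply_succ, hshift i, ih]
    congr 1
    push_cast
    ring

lemma compression_one : hamiltonCompression (Y p k) = 1 := by
  haveI : Fact (1 < Fintype.card (ZMod 2 × ZMod p)) := ⟨by rw [card_eq]; omega⟩
  have hn : Fintype.card (ZMod 2 × ZMod p) = 2 * p := card_eq
  have hone : IsHamCycle (Y p k) (cyc p k) := ⟨cyc_bij hp hk, cyc_adj hp hk⟩
  have hset : {k' | ∃ c, IsHamCycle (Y p k) c ∧ IsSymmHamCycle (Y p k) c k'} = {1} := by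
    ext k'
    simp only [Set.mem_setOf_eq, Set.mem_singleton_iff]
    constructor
    · rintro ⟨c, ⟨hbij, hadj⟩, hdvd, α, hα, hshift⟩
      have hsurj := hbij.surjective
      have hinj := hbij.injective
      rw [hn] at hdvd
      rcases dvd_two_p hp hk hdvd with rfl | rfl | hkp | rfl
      · rfl
      · -- k' = 2 : a fixed-point-free involution would be needed
        exfalso
        have hd2 : Fintype.card (ZMod 2 × ZMod p) / 2 = p := by rw [hn]; omega
        rw [hd2] at hshift
        have hpow := shift_pow hshift
        have hsq : α * α = 1 := by
          rw [← pow_two]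
          apply Equiv.ext; intro v
          obtain ⟨i, rfl⟩ := hsurj v
          rw [hpow 2 i]
          have h0 : ((2 * p : ℕ) : ZMod (Fintype.card (ZMod 2 × ZMod p))) = 0 := by
            rw [← hn]; exact ZMod.natCast_self _
          rw [h0, add_zero]
          simp
        obtain ⟨v, hv⟩ := fixed_of_sq hp hk hα hsq
        obtain ⟨i, rfl⟩ := hsurj v
        rw [hshift i] at hv
        have h1 := hinj hv
        have h0 : ((p : ℕ) : ZMod (Fintype.card (ZMod 2 × ZMod p))) = 0 :=
          add_eq_left.1 h1
        rw [ZMod.natCast_eq_zero_iff, hn] at h0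
        have := Nat.le_of_dvd (by omega) h0
        omega
      · -- k' = p : only a nontrivial translation could work, but then consecutive
        -- vertices of the cycle would have to be joined by two different spokes
        exfalso
        rw [hkp] at hshift
        have hdp : Fintype.card (ZMod 2 × ZMod p) / p = 2 := by
          rw [hn, Nat.mul_div_cancel _ (show 0 < p by omega)]
        rw [hdp] at hshift
        have hpow := shift_pow hshift
        have hppow : α ^ p = 1 := by
          apply Equiv.ext; intro v
          obtain ⟨i, rfl⟩ := hsurj v
          rw [hpow p i]
          have h0 : ((p * 2 : ℕ) : ZMod (Fintype.card (ZMod 2 × ZMod p))) = 0 := by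
            rw [mul_comm p 2, ← hn]; exact ZMod.natCast_self _
          rw [h0, add_zero]
          simp
        have hfpf : ∀ v, α v ≠ v := by
          intro v hv
          obtain ⟨i, rfl⟩ := hsurj v
          rw [hshift i] at hv
          have h1 := hinj hv
          have h0 : ((2 : ℕ) : ZMod (Fintype.card (ZMod 2 × ZMod p))) = 0 :=
            add_eq_left.1 h1
          rw [ZMod.natCast_eq_zero_iff, hn] at h0
          have := Nat.le_of_dvd (by omega) h0
          omega
        obtain ⟨cc, hcc, hφ⟩ := translation_of_fpf hp hk hα hppow hfpf
        have hev : ∀ t : ℕ,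
            c ((2 * t : ℕ) : ZMod (Fintype.card (ZMod 2 × ZMod p))) =
              ((c 0).1, (c 0).2 + ((t : ℕ) : ZMod p) * cc) := by
          intro t
          have h1 := hpow t 0
          have h2 := translation_pow hφ t (c 0).1 (c 0).2
          have h3 : (0 : ZMod (Fintype.card (ZMod 2 × ZMod p))) + ((t * 2 : ℕ) : ZMod _) =
              ((2 * t : ℕ) : ZMod (Fintype.card (ZMod 2 × ZMod p))) := by push_cast; ring
          rw [h3] at h1
          exact h1.symm.trans h2
        have hs1 : (c 1).1 ≠ (c 0).1 := by
          intro he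
          set d := ((c 1).2 - (c 0).2) * cc⁻¹ with hd
          have h2 : (c 0).2 + ((d.val : ℕ) : ZMod p) * cc = (c 1).2 := by
            rw [ZMod.natCast_rightInverse d, hd]
            field_simp
            ring
          have h3 : c ((2 * d.val : ℕ) : ZMod (Fintype.card (ZMod 2 × ZMod p))) = c 1 := by
            rw [hev d.val, h2, ← he]
          have h4 := hinj h3
          have h5 := congrArg ZMod.val h4
          rw [ZMod.val_cast_of_lt (by have := ZMod.val_lt d; have := card_eq (p := p); omega),
            ZMod.val_one] at h5
          omega
        have hside : (c 1).1 = (c 0).1 + 1 := ne_iff_add_one.1 (fun h => hs1 h.symm)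
        have hc1pair : c 1 = ((c 0).1 + 1, (c 1).2) := Prod.ext hside rfl
        have hc2 : c (1 + 1) = ((c 0).1, (c 0).2 + cc) := by
          have h1 := hev 1
          have h3 : ((2 * 1 : ℕ) : ZMod (Fintype.card (ZMod 2 × ZMod p))) =
              (1 : ZMod (Fintype.card (ZMod 2 × ZMod p))) + 1 := by push_cast; ring
          rw [h3] at h1
          rw [h1]
          exact Prod.ext rfl (by push_cast; ring)
        have h20 : (c 0).2 = (c 1).2 := by
          have hh := hadj 0
          rw [show c 0 = ((c 0).1, (c 0).2) from rfl, show (0 : ZMod (Fintype.card (ZMod 2 × ZMod p))) + 1 = 1 from by ring] at hh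
          rw [hc1pair] at hh
          rw [adj_cross_iff (zmod2_ne_add_one ((c 0).1))] at hh
          exact hh
        have h21 : (c 1).2 = (c 0).2 + cc := by
          have hh := hadj 1
          rw [hc2, hc1pair] at hh
          rw [adj_cross_iff (fun h => (zmod2_ne_add_one ((c 0).1)) h.symm)] at hh
          exact hh
        exact hcc (by linear_combination -h20 - h21)
      · -- k' = 2p : α would have order 2p, impossible
        exfalso
        have hd1 : Fintype.card (ZMod 2 × ZMod p) / (2 * p) = 1 := by
          rw [hn, Nat.div_self (by omega)]
        rw [hd1] at hshift
        have hpow := shift_pow hshift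
        have hno : ∀ j : ℕ, 0 < j → j < 2 * p → α ^ j ≠ 1 := by
          intro j hj0 hj2 hje
          have h1 := hpow j 0
          rw [hje] at h1
          simp only [Equiv.Perm.one_apply] at h1
          have h2 := hinj h1
          have h3 : ((j * 1 : ℕ) : ZMod (Fintype.card (ZMod 2 × ZMod p))) = 0 :=
            (add_eq_left.1 h2.symm)
          rw [mul_one] at h3
          rw [ZMod.natCast_eq_zero_iff, hn] at h3
          have := Nat.le_of_dvd (by omega) h3
          omega
        rcases order_cases hp hk hα with h | h | h
        · exact hno 2 (by omega) (by omega) h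
        · exact hno 4 (by omega) (by omega) h
        · exact hno p (by omega) (by omega) h
    · rintro rfl
      refine ⟨cyc p k, hone, one_dvd _, 1, one_mem _, ?_⟩
      intro i
      simp only [Nat.div_one, Equiv.Perm.one_apply]
      rw [ZMod.natCast_self, add_zero]
  have hdef : hamiltonCompression (Y p k) =
      sSup {k' | ∃ c, IsHamCycle (Y p k) c ∧ IsSymmHamCycle (Y p k) c k'} := rfl
  rw [hdef, hset]
  exact csSup_singleton 1

end Main3
end S11

/-- For every `N` there is a vertex-transitive graph with more than
`N` vertices which is not a Cayley graph (no subgroup of its automorphism group acts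
regularly on the vertices) and whose Hamilton compression equals `1`. -/
theorem stmt11 (N : ℕ) :
    ∃ (V : Type) (inst : Fintype V) (X : SimpleGraph V),
      N < @Fintype.card V inst ∧
      (∀ u v : V, ∃ g ∈ autSubgroup X, g u = v) ∧
      ¬ (∃ H : Subgroup (Equiv.Perm V), H ≤ autSubgroup X ∧
        ∀ u v : V, ∃! g : H, (g : Equiv.Perm V) u = v) ∧
      @hamiltonCompression V inst X = 1 := by
  obtain ⟨p, pp, hpN, hmod⟩ := Nat.exists_prime_gt_modEq_one (k := 4) (max N 113) (by norm_num)
  haveI : Fact (Nat.Prime p) := ⟨pp⟩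
  have hp : 113 < p := lt_of_le_of_lt (le_max_right N 113) hpN
  have hNp : N < p := lt_of_le_of_lt (le_max_left N 113) hpN
  have hsq : IsSquare (-1 : ZMod p) := (ZMod.exists_sq_eq_neg_one_iff).2 (by
    have h1 : p % 4 = 1 % 4 := hmod
    omega)
  obtain ⟨k, hk0⟩ := hsq
  have hk : k * k = -1 := hk0.symm
  refine ⟨ZMod 2 × ZMod p, inferInstance, S11.Y p k, ?_, S11.vtrans hp hk,
    S11.not_cayley hp hk, S11.compression_one hp hk⟩
  rw [S11.card_eq]
  omega
end

section
/- Let p be an odd prime and let X be a connected (2,p)-metacirculant relative to (ρ,σ). If the subgraph X̃(ρ) is connected and X is simultaneously a Cayley graph of the dihedral group of order 2p and of the cyclic group of order 2p, then the Hamilton compression of X equals 2p. -/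
open SimpleGraph

/-- The spanning subgraph `X̃(ρ)` of `X` obtained by deleting every edge whose two
endpoints lie in the same orbit of the permutation `ρ`. -/
def delSubgraph {V : Type*} (X : SimpleGraph V) (ρ : Equiv.Perm V) : SimpleGraph V where
  Adj u v := X.Adj u v ∧ ¬ ∃ a : ℤ, (ρ ^ a) u = v
  symm := ⟨by
    rintro u v ⟨h, hn⟩
    refine ⟨h.symm, ?_⟩
    rintro ⟨a, ha⟩
    exact hn ⟨-a, by rw [← ha, ← Equiv.Perm.mul_apply, ← zpow_add]; simp⟩⟩
  loopless := ⟨fun v h => h.2 ⟨0, rfl⟩⟩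

/-- `X` is an `(m,n)`-metacirculant relative to `(ρ,σ)`: `ρ` and `σ` are
automorphisms of `X`, `ρ` is `(m,n)`-semiregular (all of its orbits have size `n`,
and there are `m` of them since `|V| = m·n`), `σ` normalizes `⟨ρ⟩` with
`σρσ⁻¹ = ρ^r` for some unit `r` of `ℤ/n`, `σ` cyclically permutes the orbits of
`ρ`, and `σ^m` fixes some vertex. -/
def IsMetacirculant {V : Type*} [Fintype V] (X : SimpleGraph V) (m n : ℕ)
    (ρ σ : Equiv.Perm V) : Prop :=
  ρ ∈ autSubgroup X ∧ σ ∈ autSubgroup X ∧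
  Fintype.card V = m * n ∧
  (∀ v : V, Set.ncard {w | ∃ a : ℤ, (ρ ^ a) v = w} = n) ∧
  (∃ r : (ZMod n)ˣ, σ * ρ * σ⁻¹ = ρ ^ (r : ZMod n).val) ∧
  (∀ u v : V, ∃ b a : ℤ, (ρ ^ a) ((σ ^ b) v) = u) ∧
  (∃ v : V, (σ ^ m) v = v)

/-- `X` is a Cayley graph of the group `G`: the automorphism group of `X` contains a
subgroup isomorphic to `G` acting regularly on the vertex set. -/
def IsCayleyOf {V : Type*} (X : SimpleGraph V) (G : Type*) [Group G] : Prop :=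
  ∃ H : Subgroup (Equiv.Perm V), H ≤ autSubgroup X ∧ Nonempty (H ≃* G) ∧
    ∀ u v : V, ∃! g : H, (g : Equiv.Perm V) u = v

lemma reach_pair {V : Type*} (Y : SimpleGraph V) (Φ : V → V)
    (hdeg : ∀ u v, Y.Adj u v → v = Φ u) (hinv : ∀ u, Φ (Φ u) = u)
    {u w : V} (h : Y.Reachable u w) : w = u ∨ w = Φ u := by
  obtain ⟨q⟩ := h
  induction q with
  | nil => exact Or.inl rfl
  | @cons a x w h q ih =>
    have hx : x = Φ a := hdeg _ _ h
    rcases ih with h1 | h1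
    · exact Or.inr (h1.trans hx)
    · subst hx; exact Or.inl (h1.trans (hinv a))

lemma perm_pow_eq_one_of_orbits {V : Type*} [Fintype V] (ρ : Equiv.Perm V) (p : ℕ) (hp : 2 ≤ p)
    (h : ∀ v, Set.ncard {w | ∃ a : ℤ, (ρ^a) v = w} = p) : ρ ^ p = 1 := by
  classical
  ext v
  simp only [Equiv.Perm.one_apply]
  have hfix : ρ v ≠ v := by
    intro hv
    have h1 : {w | ∃ a : ℤ, (ρ^a) v = w} = {v} := by
      ext w
      simp only [Set.mem_setOf_eq, Set.mem_singleton_iff]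
      constructor
      · rintro ⟨a, rfl⟩
        exact (Equiv.Perm.SameCycle.eq_of_left ⟨a, rfl⟩ hv).symm
      · rintro rfl; exact ⟨0, rfl⟩
    have h2 := h v
    rw [h1, Set.ncard_singleton] at h2
    omega
  have hsupp : {w | ∃ a : ℤ, (ρ^a) v = w} = ↑((ρ.cycleOf v).support) := by
    ext w
    rw [Finset.mem_coe, Equiv.Perm.mem_support_cycleOf_iff]
    simp only [Set.mem_setOf_eq, Equiv.Perm.mem_support]
    exact ⟨fun hw => ⟨hw, hfix⟩, fun hw => hw.1⟩
  have hcard : (ρ.cycleOf v).support.card = p := by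
    have h2 := h v
    rw [hsupp, Set.ncard_coe_finset] at h2
    exact h2
  have hcyc : (ρ.cycleOf v).IsCycle := Equiv.Perm.isCycle_cycleOf ρ hfix
  have hord : orderOf (ρ.cycleOf v) = p := by rw [hcyc.orderOf, hcard]
  have h3 : (ρ.cycleOf v) ^ p = 1 := by rw [← hord]; exact pow_orderOf_eq_one _
  have h4 := Equiv.Perm.cycleOf_pow_apply_self ρ v p
  rw [h3] at h4
  simpa using h4.symm

lemma zpow_eq_pow_toNat {G : Type*} [Group G] (g : G) {n0 : ℕ} (hg : g ^ n0 = 1) (hn0 : 0 < n0)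
    (i : ℤ) : g ^ i = g ^ (i % (n0:ℤ)).toNat := by
  have hmod : ((i % (n0:ℤ)).toNat : ℤ) = i % (n0:ℤ) :=
    Int.toNat_of_nonneg (Int.emod_nonneg i (by exact_mod_cast hn0.ne'))
  calc g ^ i = g ^ ((n0:ℤ) * (i / (n0:ℤ)) + i % (n0:ℤ)) := by rw [Int.mul_ediv_add_emod]
  _ = (g ^ (n0:ℤ)) ^ (i / (n0:ℤ)) * g ^ (i % (n0:ℤ)) := by rw [zpow_add, zpow_mul]
  _ = g ^ (i % (n0:ℤ)) := by rw [zpow_natCast, hg, one_zpow, one_mul]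
  _ = g ^ (i % (n0:ℤ)).toNat := by conv_lhs => rw [← hmod, zpow_natCast]

lemma orbit_ncard_dvd (G : Type*) [Group G] [Finite G] {α : Type*} [MulAction G α] (x : α) :
    Nat.card (MulAction.orbit G x) ∣ Nat.card G := by
  have h1 : Nat.card (MulAction.orbit G x) = (MulAction.stabilizer G x).index := by
    rw [Subgroup.index_eq_card (MulAction.stabilizer G x)]
    exact Nat.card_congr (MulAction.orbitEquivQuotientStabilizer G x)
  rw [h1]
  exact (MulAction.stabilizer G x).index_dvd_card

/-- Let `p` be an odd prime and `X` a connected `(2,p)`-metacirculant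
relative to `(ρ,σ)`.  If `X̃(ρ)` is connected and `X` is simultaneously a Cayley
graph of the dihedral group of order `2p` and of the cyclic group of order `2p`,
then `κ(X) = 2p`. -/
theorem stmt18 {V : Type*} [Fintype V] (p : ℕ) (hp : p.Prime) (hodd : Odd p)
    (X : SimpleGraph V) (ρ σ : Equiv.Perm V)
    (hmeta : IsMetacirculant X 2 p ρ σ) (hconn : X.Connected)
    (htconn : (delSubgraph X ρ).Connected)
    (hdih : IsCayleyOf X (DihedralGroup p))
    (hcyc : IsCayleyOf X (Multiplicative (ZMod (2 * p)))) :
    hamiltonCompression X = 2 * p := by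
  classical
  obtain ⟨hρAut, hσAut, hcard, horb, -, -, -⟩ := hmeta
  have hp2 : 2 ≤ p := hp.two_le
  have hp3 : 3 ≤ p := by
    rcases Nat.eq_or_lt_of_le hp2 with h | h
    · exfalso; rw [← h] at hodd; exact (by decide : ¬ Odd 2) hodd
    · omega
  have hN : Fintype.card V = 2 * p := hcard
  haveI : NeZero (Fintype.card V) := ⟨by omega⟩
  haveI : NeZero (2 * p) := ⟨by omega⟩
  obtain ⟨H, hH, ⟨e⟩, hreg⟩ := hcyc
  have hV : Nonempty V := Fintype.card_pos_iff.mp (by omega)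
  obtain ⟨v0⟩ := hV
  set τ : H := e.symm (Multiplicative.ofAdd (1 : ZMod (2 * p))) with hτdef
  have he : ∀ k : ℕ, e (τ ^ k) = Multiplicative.ofAdd ((k : ZMod (2 * p))) := by
    intro k
    rw [map_pow, hτdef, e.apply_symm_apply, ← ofAdd_nsmul]
    congr 1
    rw [nsmul_eq_mul, mul_one]
  have hpow_inj : ∀ a b : ℕ, ((a : ZMod (2 * p)) = (b : ZMod (2 * p))) → τ ^ a = τ ^ b := by
    intro a b hab
    apply e.injective
    rw [he, he, hab]
  have hτord : τ ^ (2 * p) = 1 := by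
    apply e.injective
    rw [he, map_one, ZMod.natCast_self]
    rfl
  have hregv0 : ∀ h h' : H, (h : Equiv.Perm V) v0 = (h' : Equiv.Perm V) v0 → h = h' := by
    intro h h' hh
    obtain ⟨g, -, hu⟩ := hreg v0 ((h : Equiv.Perm V) v0)
    exact (hu h rfl).trans (hu h' hh.symm).symm
  set F : ZMod (2 * p) → V := fun a => ((τ ^ a.val : H) : Equiv.Perm V) v0 with hFdef
  have hFinj : Function.Injective F := by
    intro a b hab
    have h1 : τ ^ a.val = τ ^ b.val := hregv0 _ _ hab
    have h2 := congrArg e h1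
    rw [he, he] at h2
    have h3 : ((a.val : ZMod (2 * p))) = (b.val : ZMod (2 * p)) :=
      Multiplicative.ofAdd.injective h2
    rwa [ZMod.natCast_zmod_val, ZMod.natCast_zmod_val] at h3
  have hFbij : Function.Bijective F :=
    (Fintype.bijective_iff_injective_and_card F).mpr ⟨hFinj, by rw [ZMod.card, hN]⟩
  have hτap : ∀ (k : ℕ) (a : ZMod (2 * p)),
      ((τ ^ k : H) : Equiv.Perm V) (F a) = F (a + (k : ZMod (2 * p))) := by
    intro k a
    have h1 : τ ^ ((a + (k : ZMod (2 * p))).val) = τ ^ (k + a.val) := by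
      apply hpow_inj
      push_cast [ZMod.natCast_zmod_val]
      ring
    show _ = ((τ ^ ((a + (k : ZMod (2 * p))).val) : H) : Equiv.Perm V) v0
    rw [h1, pow_add]
    rfl
  have hAdjH : ∀ (h : H) (x y : V),
      (X.Adj ((h : Equiv.Perm V) x) ((h : Equiv.Perm V) y) ↔ X.Adj x y) := by
    intro h x y
    exact (hH h.2) x y
  have hedge : ∀ a s : ZMod (2 * p), X.Adj (F a) (F (a + s)) ↔ X.Adj v0 (F s) := by
    intro a s
    have h1 : F (a + s) = ((τ ^ a.val : H) : Equiv.Perm V) (F s) := by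
      rw [hτap a.val s, ZMod.natCast_zmod_val, add_comm]
    have h2 : F a = ((τ ^ a.val : H) : Equiv.Perm V) v0 := rfl
    rw [h1, h2]
    exact hAdjH _ _ _
  by_cases hgood : ∃ s : ZMod (2 * p), Nat.Coprime s.val (2 * p) ∧ X.Adj v0 (F s)
  · -- GOOD CASE
    obtain ⟨s, hcop, hadj⟩ := hgood
    set u : H := τ ^ s.val with hudef
    have hsu : IsUnit (s : ZMod (2 * p)) := by
      have := ZMod.coe_unitOfCoprime s.val hcop
      refine ⟨ZMod.unitOfCoprime s.val hcop, ?_⟩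
      rw [this, ZMod.natCast_zmod_val]
    have heu : ∀ k : ℕ, e (u ^ k) = Multiplicative.ofAdd ((k : ZMod (2 * p)) * s) := by
      intro k
      rw [hudef, ← pow_mul, he]
      congr 1
      push_cast [ZMod.natCast_zmod_val]
      ring
    have hupow : ∀ a b : ℕ, ((a : ZMod (2 * p)) = (b : ZMod (2 * p))) → u ^ a = u ^ b := by
      intro a b hab
      apply e.injective
      rw [heu, heu, hab]
    set c : ZMod (Fintype.card V) → V := fun i => ((u ^ i.val : H) : Equiv.Perm V) v0 with hcdef
    have hcinj : Function.Injective c := by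
      intro i j hij
      have h1 : u ^ i.val = u ^ j.val := hregv0 _ _ hij
      have h2 := congrArg e h1
      rw [heu, heu] at h2
      have h3 := Multiplicative.ofAdd.injective h2
      have h4 : ((i.val : ZMod (2 * p))) = (j.val : ZMod (2 * p)) :=
        hsu.mul_right_cancel h3
      have h5 : i.val = j.val := by
        have hi : i.val < 2 * p := hN ▸ i.val_lt
        have hj : j.val < 2 * p := hN ▸ j.val_lt
        have h6 := congrArg ZMod.val h4
        rwa [ZMod.val_cast_of_lt hi, ZMod.val_cast_of_lt hj] at h6
      exact ZMod.val_injective _ h5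
    have hcbij : Function.Bijective c :=
      (Fintype.bijective_iff_injective_and_card c).mpr ⟨hcinj, by rw [ZMod.card]⟩
    haveI : Fact (1 < Fintype.card V) := ⟨by omega⟩
    have hc0 : ((Fintype.card V : ℕ) : ZMod (2 * p)) = 0 := by
      rw [hN]; exact ZMod.natCast_self _
    have hval1 : ∀ i : ZMod (Fintype.card V), u ^ ((i + 1).val) = u ^ (i.val + 1) := by
      intro i
      apply hupow
      have h1 : (i + 1).val = (i.val + 1) % Fintype.card V := by
        rw [ZMod.val_add, ZMod.val_one]
      have h2 : (((i.val + 1) % Fintype.card V : ℕ) : ZMod (2 * p))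
          = ((i.val + 1 : ℕ) : ZMod (2 * p)) := by
        conv_rhs => rw [← Nat.mod_add_div (i.val + 1) (Fintype.card V)]
        push_cast [hc0]
        simp
      rw [h1, h2]
    have hstep : ∀ i : ZMod (Fintype.card V), c (i + 1) = (u : Equiv.Perm V) (c i) := by
      intro i
      show ((u ^ ((i + 1).val) : H) : Equiv.Perm V) v0 = _
      rw [hval1 i, pow_succ']
      rfl
    have hadj' : X.Adj v0 ((u : Equiv.Perm V) v0) := hadj
    have hham : IsHamCycle X c := by
      refine ⟨hcbij, fun i => ?_⟩
      rw [hstep i]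
      have h1 : (u : Equiv.Perm V) (c i) = ((u ^ i.val : H) : Equiv.Perm V)
          ((u : Equiv.Perm V) v0) := by
        have hcm : u * u ^ i.val = u ^ i.val * u := (Commute.self_pow u i.val).eq
        calc (u : Equiv.Perm V) (c i) = ((u * u ^ i.val : H) : Equiv.Perm V) v0 := rfl
        _ = ((u ^ i.val * u : H) : Equiv.Perm V) v0 := by rw [hcm]
        _ = _ := rfl
      rw [h1]
      exact (hAdjH (u ^ i.val) v0 _).mpr hadj'
    have hsymm : IsSymmHamCycle X c (2 * p) := by
      refine ⟨hN ▸ dvd_refl _, (u : Equiv.Perm V), hH u.2, fun i => ?_⟩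
      have h1 : Fintype.card V / (2 * p) = 1 := by rw [hN]; exact Nat.div_self (by omega)
      rw [h1, Nat.cast_one, hstep i]
    have hub : ∀ k ∈ {k | ∃ c, IsHamCycle X c ∧ IsSymmHamCycle X c k}, k ≤ 2 * p := by
      rintro k ⟨c', -, hdvd, -⟩
      exact Nat.le_of_dvd (by omega) (hN ▸ hdvd)
    exact le_antisymm (csSup_le ⟨2 * p, c, hham, hsymm⟩ hub)
      (le_csSup ⟨2 * p, hub⟩ ⟨c, hham, hsymm⟩)

  · -- BAD CASE
    exfalso
    push_neg at hgood
    have htP : ((τ : Equiv.Perm V)) ^ (2 * p) = 1 := by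
      have h1 : ((τ ^ (2 * p) : H) : Equiv.Perm V) = ((1 : H) : Equiv.Perm V) :=
        congrArg _ hτord
      simpa using h1
    have hρp : ρ ^ p = 1 := perm_pow_eq_one_of_orbits ρ p hp2 horb
    haveI : Fact p.Prime := ⟨hp⟩
    set G : Subgroup (Equiv.Perm V) := autSubgroup X with hGdef
    set ρG : ↥G := ⟨ρ, hρAut⟩ with hρGdef
    set tG : ↥G := ⟨(τ : Equiv.Perm V), hH τ.2⟩ with htGdef
    have hρGp : ρG ^ p = 1 := by
      apply Subtype.ext
      rw [SubgroupClass.coe_pow]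
      exact hρp
    have htGN : tG ^ (2 * p) = 1 := by
      apply Subtype.ext
      rw [SubgroupClass.coe_pow]
      exact htP
    have hPρ : IsPGroup p (Subgroup.zpowers ρG) := by
      intro x
      refine ⟨1, ?_⟩
      obtain ⟨k, hk⟩ := Subgroup.mem_zpowers_iff.mp x.2
      apply Subtype.ext
      rw [SubgroupClass.coe_pow, pow_one]
      show ((x : ↥G)) ^ p = 1
      rw [← hk]
      calc (ρG ^ k) ^ p = (ρG ^ k) ^ (p : ℤ) := (zpow_natCast _ p).symm
      _ = ρG ^ (k * (p : ℤ)) := by rw [← zpow_mul]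
      _ = (ρG ^ (p : ℤ)) ^ k := by rw [← zpow_mul, mul_comm]
      _ = 1 := by rw [zpow_natCast, hρGp, one_zpow]
    have hPt2 : IsPGroup p (Subgroup.zpowers (tG ^ 2)) := by
      intro x
      refine ⟨1, ?_⟩
      obtain ⟨k, hk⟩ := Subgroup.mem_zpowers_iff.mp x.2
      apply Subtype.ext
      rw [SubgroupClass.coe_pow, pow_one]
      show ((x : ↥G)) ^ p = 1
      rw [← hk]
      have ht2p : (tG ^ 2) ^ p = 1 := by rw [← pow_mul]; exact htGN
      calc ((tG ^ 2) ^ k) ^ p = ((tG ^ 2) ^ k) ^ (p : ℤ) := (zpow_natCast _ p).symm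
      _ = (tG ^ 2) ^ (k * (p : ℤ)) := by rw [← zpow_mul]
      _ = ((tG ^ 2) ^ (p : ℤ)) ^ k := by rw [← zpow_mul, mul_comm]
      _ = 1 := by rw [zpow_natCast, ht2p, one_zpow]
    obtain ⟨Q, hQ⟩ := hPρ.exists_le_sylow
    obtain ⟨Q', hQ'⟩ := hPt2.exists_le_sylow
    obtain ⟨g, hg⟩ := MulAction.exists_smul_eq (↥G) Q' Q
    set k0 : ↥G := g * tG ^ 2 * g⁻¹ with hk0def
    have hk0Q : k0 ∈ (Q : Subgroup ↥G) := by
      have h1 : tG ^ 2 ∈ (Q' : Subgroup ↥G) := hQ' (Subgroup.mem_zpowers _)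
      have h2 : k0 ∈ ((g • Q' : Sylow p ↥G) : Subgroup ↥G) := by
        rw [Sylow.coe_subgroup_smul]
        have h3 := Subgroup.smul_mem_pointwise_smul _ (MulAut.conj g) _ h1
        simpa [MulAut.smul_def, MulAut.conj_apply, hk0def] using h3
      rwa [hg] at h2
    -- the key orbit identification
    have key : ∀ (w : ↥G), w ∈ (Q : Subgroup ↥G) →
        (∀ v : V, Set.ncard {x | ∃ a : ℤ, (((w : Equiv.Perm V)) ^ a) v = x} = p) →
        ∀ v : V, {x | ∃ a : ℤ, (((w : Equiv.Perm V)) ^ a) v = x}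
          = MulAction.orbit ↥(Q : Subgroup ↥G) v := by
      intro w hw hcardw v
      have hsub : {x | ∃ a : ℤ, (((w : Equiv.Perm V)) ^ a) v = x}
          ⊆ MulAction.orbit ↥(Q : Subgroup ↥G) v := by
        rintro x ⟨a, rfl⟩
        refine MulAction.mem_orbit_iff.mpr ⟨⟨w ^ a, Subgroup.zpow_mem _ hw a⟩, ?_⟩
        show (((w ^ a : ↥G) : Equiv.Perm V)) v = _
        rw [SubgroupClass.coe_zpow]
      obtain ⟨n, hn⟩ := IsPGroup.iff_card.mp Q.2
      have hle1 : p ≤ (MulAction.orbit ↥(Q : Subgroup ↥G) v).ncard := by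
        have h0 := Set.ncard_le_ncard hsub (Set.toFinite _)
        rwa [hcardw v] at h0
      have hle2 : (MulAction.orbit ↥(Q : Subgroup ↥G) v).ncard ≤ 2 * p := by
        have h4 := Set.ncard_le_ncard
          (Set.subset_univ (MulAction.orbit ↥(Q : Subgroup ↥G) v)) (Set.toFinite _)
        rwa [Set.ncard_univ, Nat.card_eq_fintype_card, hN] at h4
      have hdvd : (MulAction.orbit ↥(Q : Subgroup ↥G) v).ncard ∣ p ^ n := by
        rw [← hn, ← Nat.card_coe_set_eq]
        exact orbit_ncard_dvd _ v
      obtain ⟨m, hmle, hm⟩ := (Nat.dvd_prime_pow hp).mp hdvd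
      have hcardQ : (MulAction.orbit ↥(Q : Subgroup ↥G) v).ncard = p := by
        rcases m with - | - | m
        · exfalso; rw [pow_zero] at hm; omega
        · rw [pow_one] at hm; exact hm
        · exfalso
          have h5 : p ^ 2 ≤ p ^ (m + 1 + 1) := Nat.pow_le_pow_right (by omega) (by omega)
          rw [← hm] at h5
          have h6 : p * p ≤ 2 * p := by
            calc p * p = p ^ 2 := by ring
            _ ≤ (MulAction.orbit ↥(Q : Subgroup ↥G) v).ncard := h5
            _ ≤ 2 * p := hle2
          have h7 : p ≤ 2 := Nat.le_of_mul_le_mul_right h6 (by omega)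
          omega
      exact Set.eq_of_subset_of_ncard_le hsub (by rw [hcardQ, hcardw v]) (Set.toFinite _)
    -- conjugation computations
    set gP : Equiv.Perm V := ((g : ↥G) : Equiv.Perm V) with hgPdef
    have hconjzpow : ∀ (t : Equiv.Perm V) (a : ℤ), (gP * t * gP⁻¹) ^ a = gP * t ^ a * gP⁻¹ := by
      intro t a
      have h1 := map_zpow (MulAut.conj gP) t a
      simpa [MulAut.conj_apply] using h1.symm
    have hk0P : ((k0 : ↥G) : Equiv.Perm V) = gP * ((τ : Equiv.Perm V)) ^ 2 * gP⁻¹ := by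
      simp [hk0def, htGdef, hgPdef]
    have himg : ∀ v : V, {x | ∃ a : ℤ, (((k0 : ↥G) : Equiv.Perm V) ^ a) v = x}
        = gP '' {y | ∃ a : ℤ, ((((τ : Equiv.Perm V)) ^ 2) ^ a) (gP⁻¹ v) = y} := by
      intro v
      ext x
      simp only [Set.mem_setOf_eq, Set.mem_image]
      constructor
      · rintro ⟨a, rfl⟩
        refine ⟨((((τ : Equiv.Perm V)) ^ 2) ^ a) (gP⁻¹ v), ⟨a, rfl⟩, ?_⟩
        rw [hk0P, hconjzpow]
        rfl
      · rintro ⟨y, ⟨a, ha⟩, rfl⟩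
        refine ⟨a, ?_⟩
        rw [hk0P, hconjzpow]
        show gP (((((τ : Equiv.Perm V)) ^ 2) ^ a) (gP⁻¹ v)) = gP y
        rw [ha]
    -- parity map
    set pc : ZMod (2 * p) →+* ZMod 2 := ZMod.castHom ⟨p, rfl⟩ (ZMod 2) with hpcdef
    have hpc0 : ∀ s : ZMod (2 * p), pc s = 0 ↔ 2 ∣ s.val := by
      intro s
      constructor
      · intro hs
        have h1 : pc ((s.val : ℕ) : ZMod (2 * p)) = 0 := by rwa [ZMod.natCast_zmod_val]
        rw [map_natCast] at h1
        exact (ZMod.natCast_eq_zero_iff _ _).mp h1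
      · intro hs
        have h1 : ((s.val : ℕ) : ZMod 2) = 0 := (ZMod.natCast_eq_zero_iff _ _).mpr hs
        calc pc s = pc ((s.val : ℕ) : ZMod (2 * p)) := by rw [ZMod.natCast_zmod_val]
        _ = ((s.val : ℕ) : ZMod 2) := map_natCast _ _
        _ = 0 := h1
    have hT2p : (((τ : Equiv.Perm V)) ^ 2) ^ p = 1 := by rw [← pow_mul]; exact htP
    have hcoepow : ∀ k : ℕ, ((τ : Equiv.Perm V)) ^ k = ((τ ^ k : H) : Equiv.Perm V) := by
      intro k
      rw [SubgroupClass.coe_pow]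
    have hT2orb : ∀ a : ZMod (2 * p),
        {y | ∃ i : ℤ, ((((τ : Equiv.Perm V)) ^ 2) ^ i) (F a) = y}
          = F '' {b | pc b = pc a} := by
      intro a
      ext y
      simp only [Set.mem_setOf_eq, Set.mem_image]
      constructor
      · rintro ⟨i, rfl⟩
        rw [zpow_eq_pow_toNat _ hT2p (by omega) i]
        set k := (i % (p : ℤ)).toNat with hkdef
        refine ⟨a + ((2 * k : ℕ) : ZMod (2 * p)), ?_, ?_⟩
        · rw [map_add, map_natCast]
          have h1 : ((2 * k : ℕ) : ZMod 2) = 0 :=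
            (ZMod.natCast_eq_zero_iff _ _).mpr ⟨k, rfl⟩
          rw [h1, add_zero]
        · rw [← pow_mul, hcoepow, hτap]
      · rintro ⟨b, hb, rfl⟩
        have hs : pc (b - a) = 0 := by rw [map_sub, hb, sub_self]
        obtain ⟨k, hk⟩ := (hpc0 _).mp hs
        refine ⟨(k : ℤ), ?_⟩
        calc ((((τ : Equiv.Perm V)) ^ 2) ^ (k : ℤ)) (F a)
            = ((((τ : Equiv.Perm V)) ^ 2) ^ k) (F a) := by rw [zpow_natCast]
        _ = ((τ ^ (2 * k) : H) : Equiv.Perm V) (F a) := by rw [← pow_mul, hcoepow]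
        _ = F (a + ((2 * k : ℕ) : ZMod (2 * p))) := hτap _ _
        _ = F b := by
              rw [← hk, ZMod.natCast_zmod_val]
              congr 1
              ring
    have hT2card : ∀ w : V,
        Set.ncard {y | ∃ i : ℤ, ((((τ : Equiv.Perm V)) ^ 2) ^ i) w = y} = p := by
      intro w
      obtain ⟨a, rfl⟩ := hFbij.2 w
      rw [hT2orb a, Set.ncard_image_of_injective _ hFinj]
      have hfib : {b : ZMod (2 * p) | pc b = pc a}
          = Set.range (fun j : Fin p => a + ((2 * (j : ℕ) : ℕ) : ZMod (2 * p))) := by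
        ext b
        simp only [Set.mem_setOf_eq, Set.mem_range]
        constructor
        · intro hb
          have hs : pc (b - a) = 0 := by rw [map_sub, hb, sub_self]
          obtain ⟨k, hk⟩ := (hpc0 _).mp hs
          have hklt : k < p := by
            have h2 := (b - a).val_lt
            omega
          refine ⟨⟨k, hklt⟩, ?_⟩
          show a + ((2 * k : ℕ) : ZMod (2 * p)) = b
          rw [← hk, ZMod.natCast_zmod_val]
          ring
        · rintro ⟨j, rfl⟩
          show pc (a + _) = pc a
          rw [map_add, map_natCast]
          have h1 : ((2 * (j : ℕ) : ℕ) : ZMod 2) = 0 :=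
            (ZMod.natCast_eq_zero_iff _ _).mpr ⟨_, rfl⟩
          rw [h1, add_zero]
      have hrinj : Function.Injective
          (fun j : Fin p => a + ((2 * (j : ℕ) : ℕ) : ZMod (2 * p))) := by
        intro j j' hjj
        simp only [add_right_inj] at hjj
        have h2 := congrArg ZMod.val hjj
        rw [ZMod.val_cast_of_lt (by omega), ZMod.val_cast_of_lt (by omega)] at h2
        exact Fin.ext (by omega)
      rw [hfib, ← Set.image_univ, Set.ncard_image_of_injective _ hrinj, Set.ncard_univ,
        Nat.card_eq_fintype_card, Fintype.card_fin]
    have hk0card : ∀ v : V,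
        Set.ncard {x | ∃ a : ℤ, (((k0 : ↥G) : Equiv.Perm V) ^ a) v = x} = p := by
      intro v
      rw [himg v, Set.ncard_image_of_injective _ gP.injective]
      exact hT2card _
    have horbρ : ∀ v : V, {x | ∃ a : ℤ, (ρ ^ a) v = x}
        = MulAction.orbit ↥(Q : Subgroup ↥G) v := by
      intro v
      exact key ρG (hQ (Subgroup.mem_zpowers _)) (fun v' => horb v') v
    have horbk0 : ∀ v : V, {x | ∃ a : ℤ, (((k0 : ↥G) : Equiv.Perm V) ^ a) v = x}
        = MulAction.orbit ↥(Q : Subgroup ↥G) v :=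
      key k0 hk0Q hk0card
    have hsame : ∀ x y : V, (∃ a : ℤ, (ρ ^ a) x = y) ↔
        (∃ a : ℤ, ((((τ : Equiv.Perm V)) ^ 2) ^ a) (gP⁻¹ x) = gP⁻¹ y) := by
      intro x y
      have h1 : y ∈ {xx | ∃ a : ℤ, (ρ ^ a) x = xx}
          ↔ y ∈ {xx | ∃ a : ℤ, (((k0 : ↥G) : Equiv.Perm V) ^ a) x = xx} := by
        rw [horbρ x, horbk0 x]
      have h2 : (y ∈ gP '' {yy | ∃ a : ℤ, ((((τ : Equiv.Perm V)) ^ 2) ^ a) (gP⁻¹ x) = yy}) ↔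
          (∃ a : ℤ, ((((τ : Equiv.Perm V)) ^ 2) ^ a) (gP⁻¹ x) = gP⁻¹ y) := by
        constructor
        · rintro ⟨z, hz, rfl⟩
          rwa [show gP⁻¹ (gP z) = z from gP.symm_apply_apply z]
        · intro hz
          exact ⟨gP⁻¹ y, hz, gP.apply_symm_apply y⟩
      rw [← h2, ← himg x]
      exact h1
    have hstruct : ∀ a b : ZMod (2 * p), X.Adj (F a) (F b) → pc a ≠ pc b →
        F b = ((τ ^ p : H) : Equiv.Perm V) (F a) := by
      intro a b hab hpcne
      have hb : a + (b - a) = b := by ring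
      have hadjs : X.Adj v0 (F (b - a)) := by
        refine (hedge a (b - a)).mp ?_
        rwa [hb]
      have hsodd : ¬ 2 ∣ (b - a).val := by
        intro h2
        have h3 : pc (b - a) = 0 := (hpc0 _).mpr h2
        rw [map_sub, sub_eq_zero] at h3
        exact hpcne h3.symm
      have hncop : ¬ Nat.Coprime (b - a).val (2 * p) := fun hc => hgood (b - a) hc hadjs
      have hpdvd : p ∣ (b - a).val := by
        by_contra hpd
        apply hncop
        have h2 : Nat.Coprime (b - a).val 2 :=
          Nat.coprime_comm.mp (Nat.prime_two.coprime_iff_not_dvd.mpr hsodd)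
        have h3 : Nat.Coprime (b - a).val p :=
          Nat.coprime_comm.mp (hp.coprime_iff_not_dvd.mpr hpd)
        exact Nat.Coprime.mul_right h2 h3
      have hval : (b - a).val = p := by
        obtain ⟨c, hc⟩ := hpdvd
        have hlt : (b - a).val < 2 * p := (b - a).val_lt
        rcases c with - | - | c
        · exfalso; rw [hc] at hsodd; omega
        · omega
        · exfalso
          have : p * (c + 1 + 1) ≥ p * 2 := Nat.mul_le_mul_left p (by omega)
          omega
      have h4 : F b = F (a + (((b - a).val : ℕ) : ZMod (2 * p))) := by
        rw [ZMod.natCast_zmod_val]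
        congr 1
        ring
      rw [h4, hval, ← hτap p a]
    set Φ : V → V := fun x => gP (((τ ^ p : H) : Equiv.Perm V) (gP⁻¹ x)) with hΦdef
    have hτpp : ∀ w : V, ((τ ^ p : H) : Equiv.Perm V) (((τ ^ p : H) : Equiv.Perm V) w) = w := by
      intro w
      have h1 : ((τ ^ p * τ ^ p : H) : Equiv.Perm V) w = ((1 : H) : Equiv.Perm V) w := by
        rw [← pow_add]
        congr 2
        have h2 : p + p = 2 * p := by ring
        rw [h2, hτord]
      simpa using h1
    have hΦΦ : ∀ x, Φ (Φ x) = x := by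
      intro x
      simp only [hΦdef, Equiv.Perm.coe_inv, Equiv.symm_apply_apply]
      rw [hτpp, Equiv.apply_symm_apply]
    have hdeg : ∀ x y : V, (delSubgraph X ρ).Adj x y → y = Φ x := by
      intro x y hxy
      obtain ⟨hadjxy, hnot⟩ := hxy
      have hns : ¬ ∃ a : ℤ, ((((τ : Equiv.Perm V)) ^ 2) ^ a) (gP⁻¹ x) = gP⁻¹ y := by
        rw [← hsame]; exact hnot
      obtain ⟨ax, hax⟩ := hFbij.2 (gP⁻¹ x)
      obtain ⟨ay, hay⟩ := hFbij.2 (gP⁻¹ y)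
      have hadj2 : X.Adj (gP⁻¹ x) (gP⁻¹ y) := by
        have hg2 : ((g⁻¹ : ↥G) : Equiv.Perm V) ∈ autSubgroup X := (g⁻¹ : ↥G).2
        exact (hg2 x y).mpr hadjxy
      have hpcne : pc ax ≠ pc ay := by
        intro hEq
        apply hns
        have h5 : F ay ∈ {yy | ∃ i : ℤ, ((((τ : Equiv.Perm V)) ^ 2) ^ i) (F ax) = yy} := by
          rw [hT2orb ax]
          exact ⟨ay, hEq.symm, rfl⟩
        obtain ⟨i, hi⟩ := h5
        exact ⟨i, by rw [hax, hay] at hi; exact hi⟩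
      have h6 : F ay = ((τ ^ p : H) : Equiv.Perm V) (F ax) := by
        apply hstruct ax ay _ hpcne
        rw [hax, hay]
        exact hadj2
      have h7 : gP⁻¹ y = ((τ ^ p : H) : Equiv.Perm V) (gP⁻¹ x) := by
        rw [← hax, ← hay]
        exact h6
      have h8 : gP (gP⁻¹ y) = Φ x := by
        rw [h7]
      rw [← h8, show gP (gP⁻¹ y) = y from gP.apply_symm_apply y]
    have hall : ∀ w : V, w = v0 ∨ w = Φ v0 := fun w =>
      reach_pair _ Φ hdeg hΦΦ (htconn.preconnected v0 w)
    have hcard2 : Fintype.card V ≤ 2 := by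
      have hsub : (Finset.univ : Finset V) ⊆ {v0, Φ v0} := by
        intro w _
        rcases hall w with h | h <;> simp [h]
      calc Fintype.card V = (Finset.univ : Finset V).card := rfl
      _ ≤ ({v0, Φ v0} : Finset V).card := Finset.card_le_card hsub
      _ ≤ 2 := by
            refine (Finset.card_insert_le _ _).trans ?_
            simp
    omega
end

section
/- The complement of the Petersen graph is hamiltonian and its Hamilton compression equals 5. -/
open SimpleGraph

/-- The Petersen graph: vertices are the 2-element subsets of a 5-element set, two
vertices adjacent iff the subsets are disjoint. -/
def petersenGraph : SimpleGraph {s : Finset (Fin 5) // s.card = 2} where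
  Adj a b := Disjoint (a : Finset (Fin 5)) (b : Finset (Fin 5))
  symm := ⟨fun a b h => h.symm⟩
  loopless := ⟨by
    rintro ⟨a, ha⟩ h
    simp only [disjoint_self] at h
    rw [h] at ha
    simp at ha⟩

/- ### Auxiliary material -/

abbrev PV := {s : Finset (Fin 5) // s.card = 2}

instance : DecidableRel petersenGraph.Adj := fun a b =>
  inferInstanceAs (Decidable (Disjoint (a : Finset (Fin 5)) (b : Finset (Fin 5))))

def pvv (a b : Fin 5) (h : ({a, b} : Finset (Fin 5)).card = 2 := by decide) : PV := ⟨{a, b}, h⟩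

def pvec : Fin 10 → PV :=
  ![pvv 0 1, pvv 0 2, pvv 1 2, pvv 1 3, pvv 2 3, pvv 2 4, pvv 3 4, pvv 3 0, pvv 4 0, pvv 4 1]

def pcfun : ZMod 10 → PV := fun i => pvec ⟨i.val, i.val_lt⟩

def pe : Equiv.Perm (Fin 5) := Equiv.addLeft 1

def aperm : Equiv.Perm PV where
  toFun s := ⟨s.1.map pe.toEmbedding, by rw [Finset.card_map]; exact s.2⟩
  invFun s := ⟨s.1.map pe.symm.toEmbedding, by rw [Finset.card_map]; exact s.2⟩
  left_inv := by decide
  right_inv := by decide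

lemma pcfun_ham : Function.Bijective pcfun ∧
    ∀ i : ZMod 10, petersenGraphᶜ.Adj (pcfun i) (pcfun (i + 1)) := by decide

lemma aperm_aut : ∀ u v : PV, petersenGraphᶜ.Adj (aperm u) (aperm v) ↔ petersenGraphᶜ.Adj u v := by
  decide

lemma aperm_shift : ∀ i : ZMod 10, aperm (pcfun i) = pcfun (i + ((2 : ℕ) : ZMod 10)) := by decide

lemma petersen_deg : ∀ v : PV, (Finset.univ.filter (petersenGraph.Adj v)).card = 3 := by decide

set_option maxRecDepth 4000 in
set_option synthInstance.maxSize 1000 in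
set_option synthInstance.maxHeartbeats 1000000 in
lemma petersen_c4free : ∀ u v w1 w2 : PV, u ≠ v → w1 ≠ w2 → petersenGraph.Adj u w1 →
    petersenGraph.Adj w1 v → petersenGraph.Adj v w2 → petersenGraph.Adj w2 u → False := by decide

lemma mem_aut_compl {W : Type*} (X : SimpleGraph W) (π : Equiv.Perm W)
    (h : π ∈ autSubgroup Xᶜ) : π ∈ autSubgroup X := by
  intro u v
  have h2 := h u v
  simp only [compl_adj] at h2
  by_cases huv : u = v
  · subst huv; simp
  · have hpi : π u ≠ π v := fun hh => huv (π.injective hh)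
    constructor
    · intro hA
      by_contra hB
      exact ((h2.mpr ⟨huv, hB⟩).2) hA
    · intro hA
      by_contra hB
      exact (h2.mp ⟨hpi, hB⟩).2 hA

lemma zmod10_selfneg : ∀ x : ZMod 10, x = -x → x = 0 ∨ x = 5 := by decide

lemma no10 (c : ZMod 10 → PV) (hbij : Function.Bijective c)
    (α : Equiv.Perm PV) (hα : α ∈ autSubgroup petersenGraph)
    (hshift : ∀ i, α (c i) = c (i + 1)) : False := by
  have hval : ∀ i : ZMod 10, ((i.val : ℕ) : ZMod 10) = i := by
    intro i; rw [ZMod.natCast_val, ZMod.cast_id]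
  have hpow : ∀ (t : ℕ) (i : ZMod 10), (α ^ t) (c i) = c (i + t) := by
    intro t
    induction t with
    | zero => intro i; simp
    | succ n ih =>
        intro i
        rw [pow_succ, Equiv.Perm.mul_apply, hshift, ih]
        congr 1
        push_cast
        ring
  have hmem : ∀ t : ℕ, (α ^ t) ∈ autSubgroup petersenGraph := fun t => pow_mem hα t
  have hcirc : ∀ i j : ZMod 10,
      petersenGraph.Adj (c i) (c j) ↔ petersenGraph.Adj (c 0) (c (j - i)) := by
    intro i j
    have h1 := hmem i.val (c 0) (c (j - i))
    rw [hpow, hpow, hval, zero_add, sub_add_cancel] at h1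
    exact h1
  set S : Finset (ZMod 10) := Finset.univ.filter (fun d => petersenGraph.Adj (c 0) (c d)) with hS
  have hmemS : ∀ d, d ∈ S ↔ petersenGraph.Adj (c 0) (c d) := by
    intro d; simp [hS]
  have h0S : (0 : ZMod 10) ∉ S := by
    rw [hmemS]; exact petersenGraph.loopless.irrefl _
  have hsym : ∀ x ∈ S, -x ∈ S := by
    intro x hx
    rw [hmemS] at hx ⊢
    have := (hcirc x 0).mp hx.symm
    simpa using this
  have hcardS : S.card = 3 := by
    have himg : S.image c = Finset.univ.filter (fun w => petersenGraph.Adj (c 0) w) := by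
      ext w
      simp only [Finset.mem_image, Finset.mem_filter, Finset.mem_univ, true_and, hS]
      constructor
      · rintro ⟨d, hd, rfl⟩; exact hd
      · intro hw
        obtain ⟨d, rfl⟩ := hbij.surjective w
        exact ⟨d, hw, rfl⟩
    have hci := Finset.card_image_of_injective S hbij.injective
    rw [himg] at hci
    rw [← hci, petersen_deg]
  have ha : ∃ a ∈ S, a ≠ -a := by
    by_contra h
    push_neg at h
    have hsub : S ⊆ {0, 5} := by
      intro x hx
      rcases zmod10_selfneg x (h x hx) with h' | h' <;> simp [h']
    have hle := Finset.card_le_card hsub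
    rw [hcardS] at hle
    have h2 : ({0, 5} : Finset (ZMod 10)).card ≤ 2 :=
      le_trans (Finset.card_insert_le _ _) (by simp)
    omega
  obtain ⟨a, haS, hane⟩ := ha
  have hnaS : -a ∈ S := hsym a haS
  have ha5 : a ≠ 5 := fun h => hane (by rw [h]; decide)
  have ha0 : a ≠ 0 := fun h => h0S (h ▸ haS)
  have hb : ∃ b ∈ S, b ∉ ({a, -a} : Finset (ZMod 10)) := by
    by_contra h
    push_neg at h
    have hsub : S ⊆ {a, -a} := h
    have hle := Finset.card_le_card hsub
    rw [hcardS] at hle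
    have : ({a, -a} : Finset (ZMod 10)).card ≤ 2 := Finset.card_insert_le _ _
    omega
  obtain ⟨b, hbS, hbne⟩ := hb
  simp only [Finset.mem_insert, Finset.mem_singleton, not_or] at hbne
  have hSeq : S = {a, -a, b} := by
    symm
    apply Finset.eq_of_subset_of_card_le
    · intro x hx
      simp only [Finset.mem_insert, Finset.mem_singleton] at hx
      rcases hx with rfl | rfl | rfl <;> assumption
    · rw [hcardS]
      have hcard3 : ({a, -a, b} : Finset (ZMod 10)).card = 3 := by
        rw [Finset.card_insert_of_notMem (by
          simp only [Finset.mem_insert, Finset.mem_singleton, not_or]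
          exact ⟨hane, fun h => hbne.1 h.symm⟩),
          Finset.card_insert_of_notMem (by
          simp only [Finset.mem_singleton]
          exact fun h => hbne.2 h.symm),
          Finset.card_singleton]
      rw [hcard3]
  have hb5 : b = 5 := by
    have hnb : -b ∈ S := hsym b hbS
    rw [hSeq] at hnb
    simp only [Finset.mem_insert, Finset.mem_singleton] at hnb
    rcases hnb with h | h | h
    · exact absurd (by rw [← h, neg_neg]) hbne.2
    · exact absurd (neg_inj.mp h) hbne.1
    · rcases zmod10_selfneg b h.symm with h0 | h5
      · exact absurd (h0 ▸ hbS) h0S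
      · exact h5
  have h5S : (5 : ZMod 10) ∈ S := hb5 ▸ hbS
  -- build the 4-cycle c 0, c a, c (a+5), c 5
  have e1 : petersenGraph.Adj (c 0) (c a) := (hmemS a).mp haS
  have e2 : petersenGraph.Adj (c a) (c (a + 5)) := by
    rw [hcirc]
    have : a + 5 - a = 5 := by ring
    rw [this]
    exact (hmemS 5).mp h5S
  have e3 : petersenGraph.Adj (c (a + 5)) (c 5) := by
    rw [hcirc]
    have : (5 : ZMod 10) - (a + 5) = -a := by ring
    rw [this]
    exact (hmemS (-a)).mp hnaS
  have e4 : petersenGraph.Adj (c 5) (c 0) := by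
    rw [hcirc]
    have : (0 : ZMod 10) - 5 = 5 := by decide
    rw [this]
    exact (hmemS 5).mp h5S
  have hne1 : c 0 ≠ c (a + 5) := by
    intro h
    have := hbij.injective h
    have : a = 5 := by
      have h5' : a + 5 = 0 := this.symm
      have : a = -5 := by linear_combination h5'
      rw [this]; decide
    exact ha5 this
  have hne2 : c a ≠ c 5 := fun h => ha5 (hbij.injective h)
  exact petersen_c4free (c 0) (c (a + 5)) (c a) (c 5) hne1 hne2 e1 e2 e3 e4

lemma card_PV : Fintype.card PV = 10 := rfl

/-- The complement of the Petersen graph is hamiltonian and its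
Hamilton compression equals `5`. -/
theorem stmt19 :
    (∃ c, IsHamCycle petersenGraphᶜ c) ∧ hamiltonCompression petersenGraphᶜ = 5 := by
  have hham : IsHamCycle petersenGraphᶜ pcfun := pcfun_ham
  have h5sym : IsSymmHamCycle petersenGraphᶜ pcfun 5 := by
    refine ⟨by rw [card_PV]; norm_num, ⟨aperm, aperm_aut, ?_⟩⟩
    intro i
    exact aperm_shift i
  have h5 : 5 ∈ {k | ∃ c, IsHamCycle petersenGraphᶜ c ∧ IsSymmHamCycle petersenGraphᶜ c k} :=
    ⟨pcfun, hham, h5sym⟩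
  have hub : ∀ k ∈ {k | ∃ c, IsHamCycle petersenGraphᶜ c ∧ IsSymmHamCycle petersenGraphᶜ c k},
      k ≤ 5 := by
    rintro k ⟨c, hc, hdvd, α, hαmem, hαshift⟩
    rw [card_PV] at hdvd
    by_contra hk5
    push_neg at hk5
    have hk10 : k ≤ 10 := Nat.le_of_dvd (by norm_num) hdvd
    have hk : k = 10 := by interval_cases k <;> revert hdvd <;> decide
    subst hk
    have hα' : α ∈ autSubgroup petersenGraph := mem_aut_compl _ α hαmem
    refine no10 c hc.1 α hα' ?_
    intro i
    have := hαshift i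
    have h1 : ((Fintype.card PV / 10 : ℕ) : ZMod (Fintype.card PV)) = 1 := by decide
    rw [h1] at this
    exact this
  refine ⟨⟨pcfun, hham⟩, ?_⟩
  exact le_antisymm (csSup_le ⟨5, h5⟩ hub) (le_csSup ⟨5, hub⟩ h5)
end
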